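/- arXiv:2603.02577 — 8 statements merged into one kernel-verified Lean document; each statement's English description precedes it below -/
import Mathlib

section
/- Mean-path TD(0) with a constant step-size converges linearly: let w* be the TD fixed point (g(w*) = 0), fix a constant step-size η with 0 < η ≤ (1−γ)/8, and define iterates w_{t+1} = w_t + η g(w_t) for t = 1, …, T starting from any w_1 ∈ ℝ^d. Then ‖w_{T+1} − w*‖² ≤ exp(−η(1−γ)ω T) · ‖w_1 − w*‖². -/
open scoped RealInnerProductSpace BigOperators

/-- The TD(0) update direction for a transition `(s, s')`:
`g_{s,s'}(w) = (r(s) + γ ⟪w, φ s'⟫ − ⟪w, φ s⟫) φ(s)`. -/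
noncomputable def tdDir {S : Type*} {d : ℕ} (φ : S → EuclideanSpace ℝ (Fin d))
    (r : S → ℝ) (γ : ℝ) (s s' : S) (w : EuclideanSpace ℝ (Fin d)) :
    EuclideanSpace ℝ (Fin d) :=
  (r s + γ * ⟪w, φ s'⟫ - ⟪w, φ s⟫) • φ s

/-- The mean-path TD(0) direction `g(w) = ∑_{s,s'} μ(s) P(s,s') g_{s,s'}(w)`. -/
noncomputable def meanDir {S : Type*} [Fintype S] {d : ℕ}
    (P : S → S → ℝ) (μ : S → ℝ) (φ : S → EuclideanSpace ℝ (Fin d))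
    (r : S → ℝ) (γ : ℝ) (w : EuclideanSpace ℝ (Fin d)) :
    EuclideanSpace ℝ (Fin d) :=
  ∑ s, ∑ s', (μ s * P s s') • tdDir φ r γ s s' w

lemma td0_scalar_step (η γ ω A Sv n2 N2 : ℝ)
    (hη0 : 0 < η) (hη1 : η ≤ (1 - γ) / 8) (hγ0 : 0 < γ)
    (hSnn : 0 ≤ Sv) (hn2 : 0 ≤ n2)
    (hA : A ≤ Sv) (hN2 : N2 ≤ 4 * Sv)
    (hcov : ω * n2 ≤ Sv) (hω0 : 0 < ω) :
    n2 + 2 * (η * (γ * A - Sv)) + η ^ 2 * N2 ≤ (1 - η * (1 - γ) * ω) * n2 := by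
  have h1γ : 0 < 1 - γ := by nlinarith
  have h6 : η * (γ * A - Sv) ≤ η * (γ * Sv - Sv) :=
    mul_le_mul_of_nonneg_left (by nlinarith) hη0.le
  have h7 : η ^ 2 * N2 ≤ η ^ 2 * (4 * Sv) :=
    mul_le_mul_of_nonneg_left hN2 (sq_nonneg η)
  have h80 : 4 * η ^ 2 ≤ η * (1 - γ) := by nlinarith
  have h8 : η ^ 2 * (4 * Sv) ≤ η * (1 - γ) * Sv := by nlinarith
  have h9 : η * (1 - γ) * (ω * n2) ≤ η * (1 - γ) * Sv :=
    mul_le_mul_of_nonneg_left hcov (by positivity)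
  nlinarith [h6, h7, h8, h9]

/-- mean-path TD(0) with a constant step-size `0 < η ≤ (1−γ)/8`
converges linearly: `‖w_{T+1} − w*‖² ≤ exp(−η(1−γ)ω T) ‖w_1 − w*‖²`. -/
theorem td0_mean_path_constant_step
    {S : Type*} [Fintype S] {d : ℕ}
    (P : S → S → ℝ) (μ : S → ℝ) (φ : S → EuclideanSpace ℝ (Fin d))
    (r : S → ℝ) (γ ω η : ℝ) (wstar : EuclideanSpace ℝ (Fin d))
    (hP : ∀ s s', 0 ≤ P s s') (hProw : ∀ s, ∑ s', P s s' = 1)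
    (hμ : ∀ s, 0 ≤ μ s) (hμsum : ∑ s, μ s = 1)
    (hstat : ∀ s', ∑ s, μ s * P s s' = μ s')
    (hφ : ∀ s, ‖φ s‖ ≤ 1)
    (hr : ∀ s, 0 ≤ r s ∧ r s ≤ 1)
    (hγ : 0 < γ ∧ γ ≤ 1) (hω : 0 < ω ∧ ω ≤ 1)
    (hcov : ∀ v : EuclideanSpace ℝ (Fin d), ω * ‖v‖ ^ 2 ≤ ∑ s, μ s * ⟪v, φ s⟫ ^ 2)
    (hstar : meanDir P μ φ r γ wstar = 0)
    (hη : 0 < η ∧ η ≤ (1 - γ) / 8)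
    (w : ℕ → EuclideanSpace ℝ (Fin d))
    (hrec : ∀ t, 1 ≤ t → w (t + 1) = w t + η • meanDir P μ φ r γ (w t))
    (T : ℕ) :
    ‖w (T + 1) - wstar‖ ^ 2 ≤
      Real.exp (-(η * (1 - γ) * ω * T)) * ‖w 1 - wstar‖ ^ 2 := by
  obtain ⟨hγ0, hγ1⟩ := hγ
  obtain ⟨hω0, hω1⟩ := hω
  obtain ⟨hη0, hη1⟩ := hη
  have h1γ : 0 < 1 - γ := by nlinarith
  -- helper sums
  have hrow : ∀ f : S → ℝ, ∑ s, ∑ s', (μ s * P s s') * f s = ∑ s, μ s * f s := by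
    intro f
    refine Finset.sum_congr rfl fun s _ => ?_
    calc ∑ s', (μ s * P s s') * f s = (∑ s', P s s') * (μ s * f s) := by
          rw [Finset.sum_mul]; exact Finset.sum_congr rfl fun s' _ => by ring
      _ = μ s * f s := by rw [hProw s, one_mul]
  have hcol : ∀ f : S → ℝ, ∑ s, ∑ s', (μ s * P s s') * f s' = ∑ s', μ s' * f s' := by
    intro f
    rw [Finset.sum_comm]
    refine Finset.sum_congr rfl fun s' _ => ?_
    calc ∑ s, (μ s * P s s') * f s' = (∑ s, μ s * P s s') * f s' :=
          (Finset.sum_mul _ _ _).symm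
      _ = μ s' * f s' := by rw [hstat]
  -- one-step contraction
  have key : ∀ u : EuclideanSpace ℝ (Fin d),
      ‖(u + η • meanDir P μ φ r γ u) - wstar‖ ^ 2 ≤
        Real.exp (-(η * (1 - γ) * ω)) * ‖u - wstar‖ ^ 2 := by
    intro u
    set v : EuclideanSpace ℝ (Fin d) := u - wstar with hv
    set x : S → ℝ := fun s => ⟪v, φ s⟫ with hx
    have hdiff : ∀ s s', tdDir φ r γ s s' u - tdDir φ r γ s s' wstar
        = (γ * x s' - x s) • φ s := by
      intro s s'
      simp only [tdDir, ← sub_smul]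
      congr 1
      simp only [hx, hv, inner_sub_left]
      ring
    have hg : meanDir P μ φ r γ u
        = ∑ s, ∑ s', (μ s * P s s') • ((γ * x s' - x s) • φ s) := by
      have h0 : meanDir P μ φ r γ u
          = meanDir P μ φ r γ u - meanDir P μ φ r γ wstar := by rw [hstar, sub_zero]
      rw [h0, meanDir, meanDir, ← Finset.sum_sub_distrib]
      refine Finset.sum_congr rfl fun s _ => ?_
      rw [← Finset.sum_sub_distrib]
      exact Finset.sum_congr rfl fun s' _ => by rw [← smul_sub, hdiff]
    set Sval : ℝ := ∑ s, μ s * x s ^ 2 with hSval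
    have hSnn : 0 ≤ Sval :=
      Finset.sum_nonneg fun s _ => mul_nonneg (hμ s) (sq_nonneg _)
    have hcovv : ω * ‖v‖ ^ 2 ≤ Sval := hcov v
    -- inner product bound
    have hinner : ⟪v, meanDir P μ φ r γ u⟫
        = ∑ s, ∑ s', (μ s * P s s') * ((γ * x s' - x s) * x s) := by
      rw [hg, inner_sum]
      refine Finset.sum_congr rfl fun s _ => ?_
      rw [inner_sum]
      refine Finset.sum_congr rfl fun s' _ => ?_
      rw [real_inner_smul_right, real_inner_smul_right]
    have hA2 : ∑ s, ∑ s', (μ s * P s s') * (2 * (x s * x s'))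
        ≤ ∑ s, ∑ s', (μ s * P s s') * (x s ^ 2 + x s' ^ 2) := by
      refine Finset.sum_le_sum fun s _ => Finset.sum_le_sum fun s' _ => ?_
      have h1 : 2 * (x s * x s') ≤ x s ^ 2 + x s' ^ 2 := by nlinarith [sq_nonneg (x s - x s')]
      exact mul_le_mul_of_nonneg_left h1 (mul_nonneg (hμ s) (hP s s'))
    have hsplit : ∑ s, ∑ s', (μ s * P s s') * (x s ^ 2 + x s' ^ 2) = Sval + Sval := by
      have : ∀ s s', (μ s * P s s') * (x s ^ 2 + x s' ^ 2)
          = (μ s * P s s') * x s ^ 2 + (μ s * P s s') * x s' ^ 2 := fun s s' => by ring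
      simp only [this, Finset.sum_add_distrib]
      rw [hrow (fun s => x s ^ 2), hcol (fun s => x s ^ 2)]
    have hAfac : ∑ s, ∑ s', (μ s * P s s') * (2 * (x s * x s'))
        = 2 * ∑ s, ∑ s', (μ s * P s s') * (x s * x s') := by
      rw [Finset.mul_sum]
      exact Finset.sum_congr rfl fun s _ => by
        rw [Finset.mul_sum]; exact Finset.sum_congr rfl fun s' _ => by ring
    set A : ℝ := ∑ s, ∑ s', (μ s * P s s') * (x s * x s') with hAdef
    have hA : A ≤ Sval := by
      have := hA2
      rw [hAfac, hsplit] at this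
      linarith
    have hinner2 : ⟪v, meanDir P μ φ r γ u⟫ = γ * A - Sval := by
      rw [hinner]
      have h1 : ∀ s s', (μ s * P s s') * ((γ * x s' - x s) * x s)
          = γ * ((μ s * P s s') * (x s * x s')) - (μ s * P s s') * x s ^ 2 :=
        fun s s' => by ring
      simp only [h1, Finset.sum_sub_distrib, ← Finset.mul_sum]
      rw [hrow (fun s => x s ^ 2)]
    -- norm bound
    set M : ℝ := ∑ s, μ s * |x s| with hM
    have hMnn : 0 ≤ M := Finset.sum_nonneg fun s _ => mul_nonneg (hμ s) (abs_nonneg _)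
    have hM2 : M ^ 2 ≤ Sval := by
      have h := Finset.sum_mul_sq_le_sq_mul_sq Finset.univ
        (fun s => Real.sqrt (μ s)) (fun s => Real.sqrt (μ s) * |x s|)
      have e1 : ∑ s, Real.sqrt (μ s) * (Real.sqrt (μ s) * |x s|) = M := by
        refine Finset.sum_congr rfl fun s _ => ?_
        rw [← mul_assoc, Real.mul_self_sqrt (hμ s)]
      have e2 : ∑ s, Real.sqrt (μ s) ^ 2 = 1 := by
        rw [← hμsum]
        exact Finset.sum_congr rfl fun s _ => Real.sq_sqrt (hμ s)
      have e3 : ∑ s, (Real.sqrt (μ s) * |x s|) ^ 2 = Sval := by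
        refine Finset.sum_congr rfl fun s _ => ?_
        rw [mul_pow, Real.sq_sqrt (hμ s), sq_abs]
      rw [e1, e2, e3, one_mul] at h
      exact h
    have hnorm : ‖meanDir P μ φ r γ u‖ ≤ γ * M + M := by
      have h1 : ‖meanDir P μ φ r γ u‖
          ≤ ∑ s, ∑ s', (μ s * P s s') * (γ * |x s'| + |x s|) := by
        rw [hg]
        refine (norm_sum_le _ _).trans (Finset.sum_le_sum fun s _ => ?_)
        refine (norm_sum_le _ _).trans (Finset.sum_le_sum fun s' _ => ?_)
        rw [norm_smul, norm_smul, Real.norm_eq_abs, Real.norm_eq_abs,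
          abs_of_nonneg (mul_nonneg (hμ s) (hP s s'))]
        have hc : |γ * x s' - x s| ≤ γ * |x s'| + |x s| := by
          refine (abs_sub _ _).trans ?_
          rw [abs_mul, abs_of_pos hγ0]
        calc (μ s * P s s') * (|γ * x s' - x s| * ‖φ s‖)
            ≤ (μ s * P s s') * ((γ * |x s'| + |x s|) * 1) := by
              refine mul_le_mul_of_nonneg_left ?_ (mul_nonneg (hμ s) (hP s s'))
              exact mul_le_mul hc (hφ s) (norm_nonneg _)
                (by positivity)
          _ = (μ s * P s s') * (γ * |x s'| + |x s|) := by ring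
      have h2 : ∑ s, ∑ s', (μ s * P s s') * (γ * |x s'| + |x s|) = γ * M + M := by
        have e : ∀ s s', (μ s * P s s') * (γ * |x s'| + |x s|)
            = γ * ((μ s * P s s') * |x s'|) + (μ s * P s s') * |x s| := fun s s' => by ring
        simp only [e, Finset.sum_add_distrib, ← Finset.mul_sum]
        rw [hrow (fun s => |x s|), hcol (fun s => |x s|)]
      linarith [h1, h2.le, h2.ge]
    have hnorm2 : ‖meanDir P μ φ r γ u‖ ^ 2 ≤ 4 * Sval := by
      have hn0 : (0:ℝ) ≤ ‖meanDir P μ φ r γ u‖ := norm_nonneg _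
      have h3 : ‖meanDir P μ φ r γ u‖ ^ 2 ≤ (γ * M + M) ^ 2 :=
        pow_le_pow_left₀ hn0 hnorm 2
      have h4 : (γ * M + M) ^ 2 ≤ 4 * M ^ 2 := by
        nlinarith [mul_nonneg (mul_nonneg (sq_nonneg M) h1γ.le)
          (by linarith : (0:ℝ) ≤ 3 + γ)]
      linarith [h3, h4, hM2]
    clear_value v x Sval A M
    clear hdiff hg hinner hA2 hsplit hAfac hAdef hM2 hM hSval hx hrow hcol hrec hcov hstat hstar hφ hr hμ hμsum hP hProw
    -- expand the squared norm
    have hexp : (u + η • meanDir P μ φ r γ u) - wstar = v + η • meanDir P μ φ r γ u := by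
      rw [hv]; abel
    have hsq : ‖v + η • meanDir P μ φ r γ u‖ ^ 2
        = ‖v‖ ^ 2 + 2 * (η * ⟪v, meanDir P μ φ r γ u⟫)
          + η ^ 2 * ‖meanDir P μ φ r γ u‖ ^ 2 := by
      rw [norm_add_sq_real, real_inner_smul_right, norm_smul, Real.norm_eq_abs,
        abs_of_pos hη0, mul_pow]
    have hγA : γ * A ≤ γ * Sval := mul_le_mul_of_nonneg_left hA hγ0.le
    have hstep : ‖v + η • meanDir P μ φ r γ u‖ ^ 2 ≤ (1 - η * (1 - γ) * ω) * ‖v‖ ^ 2 := by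
      rw [hsq, hinner2]
      exact td0_scalar_step η γ ω A Sval (‖v‖ ^ 2) (‖meanDir P μ φ r γ u‖ ^ 2)
        hη0 hη1 hγ0 hSnn (sq_nonneg _) hA hnorm2 hcovv hω0
    have hexpo : 1 - η * (1 - γ) * ω ≤ Real.exp (-(η * (1 - γ) * ω)) := by
      have := Real.add_one_le_exp (-(η * (1 - γ) * ω))
      linarith
    calc ‖(u + η • meanDir P μ φ r γ u) - wstar‖ ^ 2
        = ‖v + η • meanDir P μ φ r γ u‖ ^ 2 := by rw [hexp]
      _ ≤ (1 - η * (1 - γ) * ω) * ‖v‖ ^ 2 := hstep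
      _ ≤ Real.exp (-(η * (1 - γ) * ω)) * ‖v‖ ^ 2 :=
          mul_le_mul_of_nonneg_right hexpo (sq_nonneg _)
  -- induction on T
  induction T with
  | zero => simp
  | succ T ih =>
    have hw : w (T + 1 + 1) = w (T + 1) + η • meanDir P μ φ r γ (w (T + 1)) :=
      hrec (T + 1) (Nat.le_add_left 1 T)
    calc ‖w (T + 1 + 1) - wstar‖ ^ 2
        ≤ Real.exp (-(η * (1 - γ) * ω)) * ‖w (T + 1) - wstar‖ ^ 2 := by
          rw [hw]; exact key (w (T + 1))
      _ ≤ Real.exp (-(η * (1 - γ) * ω)) *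
            (Real.exp (-(η * (1 - γ) * ω * T)) * ‖w 1 - wstar‖ ^ 2) :=
          mul_le_mul_of_nonneg_left ih (Real.exp_pos _).le
      _ = Real.exp (-(η * (1 - γ) * ω * (T + 1 : ℕ))) * ‖w 1 - wstar‖ ^ 2 := by
          rw [← mul_assoc, ← Real.exp_add]
          push_cast
          ring_nf
end

section
/- TD(0) with i.i.d. sampling and a constant step-size: let ((s_t, s_t'))_{t≥1} be i.i.d. random pairs with joint law ℙ(s_t = s, s_t' = s') = μ(s)P(s,s'), and define random iterates w_{t+1} = w_t + η g_{s_t, s_t'}(w_t) from a deterministic w_1 ∈ ℝ^d, with constant step-size 0 < η ≤ (1−γ)/8. Then for every T, E[‖w_{T+1} − w*‖²] ≤ exp(−η(1−γ)ω T) · ‖w_1 − w*‖² + 2ησ²/((1−γ)ω), where σ² = ∑_{s,s'} μ(s)P(s,s') ‖g_{s,s'}(w*)‖². -/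
open scoped RealInnerProductSpace BigOperators
open MeasureTheory

lemma norm_add_sq_le_two {d : ℕ} (a b : EuclideanSpace ℝ (Fin d)) :
    ‖a + b‖ ^ 2 ≤ 2 * ‖a‖ ^ 2 + 2 * ‖b‖ ^ 2 := by
  have h := norm_add_sq_real a b
  have h2 := real_inner_le_norm a b
  nlinarith [sq_nonneg (‖a‖ - ‖b‖)]

set_option maxHeartbeats 1000000 in
lemma td_step_bound {S : Type*} [Fintype S] {d : ℕ}
    (P : S → S → ℝ) (μ : S → ℝ) (φ : S → EuclideanSpace ℝ (Fin d))
    (r : S → ℝ) (γ ω η : ℝ) (wstar : EuclideanSpace ℝ (Fin d))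
    (hP : ∀ s s', 0 ≤ P s s') (hProw : ∀ s, ∑ s', P s s' = 1)
    (hμ : ∀ s, 0 ≤ μ s) (hμsum : ∑ s, μ s = 1)
    (hstat : ∀ s', ∑ s, μ s * P s s' = μ s')
    (hφ : ∀ s, ‖φ s‖ ≤ 1)
    (hγ : 0 < γ ∧ γ ≤ 1) (hω : 0 < ω ∧ ω ≤ 1)
    (hcov : ∀ v : EuclideanSpace ℝ (Fin d), ω * ‖v‖ ^ 2 ≤ ∑ s, μ s * ⟪v, φ s⟫ ^ 2)
    (hstar : meanDir P μ φ r γ wstar = 0)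
    (hη : 0 < η ∧ η ≤ (1 - γ) / 8)
    (w : EuclideanSpace ℝ (Fin d)) :
    ∑ s, ∑ s', (μ s * P s s') * ‖(w + η • tdDir φ r γ s s' w) - wstar‖ ^ 2 ≤
      (1 - η * (1 - γ) * ω) * ‖w - wstar‖ ^ 2 +
        2 * η ^ 2 * (∑ s, ∑ s', μ s * P s s' * ‖tdDir φ r γ s s' wstar‖ ^ 2) := by
  set v := w - wstar with hv
  set A := ∑ s, μ s * ⟪v, φ s⟫ ^ 2 with hAdef
  set σ2 := ∑ s, ∑ s', μ s * P s s' * ‖tdDir φ r γ s s' wstar‖ ^ 2 with hσ2def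
  have hγlt : γ < 1 := by nlinarith [hη.1, hη.2]
  have hp : ∀ s s', 0 ≤ μ s * P s s' := fun s s' => mul_nonneg (hμ s) (hP s s')
  have hA0 : 0 ≤ A := Finset.sum_nonneg fun s _ => mul_nonneg (hμ s) (sq_nonneg _)
  have hσ20 : 0 ≤ σ2 := Finset.sum_nonneg fun s _ => Finset.sum_nonneg fun s' _ =>
    mul_nonneg (hp s s') (sq_nonneg _)
  -- decomposition of tdDir at w
  have key : ∀ s s', tdDir φ r γ s s' w =
      tdDir φ r γ s s' wstar + (γ * ⟪v, φ s'⟫ - ⟪v, φ s⟫) • φ s := by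
    intro s s'
    rw [tdDir, tdDir, ← add_smul]
    congr 1
    rw [hv, inner_sub_left, inner_sub_left]
    ring
  -- sum of weights is 1
  have hsum1 : ∑ s, ∑ s', μ s * P s s' = 1 := by
    simp_rw [← Finset.mul_sum, hProw, mul_one, hμsum]
  -- stationarity sums
  have hstatA : ∑ s, ∑ s', (μ s * P s s') * ⟪v, φ s'⟫ ^ 2 = A := by
    rw [Finset.sum_comm]
    refine Finset.sum_congr rfl fun s' _ => ?_
    rw [← Finset.sum_mul, hstat]
  have hPA : ∑ s, ∑ s', (μ s * P s s') * ⟪v, φ s⟫ ^ 2 = A := by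
    refine Finset.sum_congr rfl fun s _ => ?_
    calc ∑ s', (μ s * P s s') * ⟪v, φ s⟫ ^ 2
        = (μ s * ⟪v, φ s⟫ ^ 2) * ∑ s', P s s' := by
          rw [Finset.mul_sum]; exact Finset.sum_congr rfl fun s' _ => by ring
      _ = μ s * ⟪v, φ s⟫ ^ 2 := by rw [hProw, mul_one]
  -- mean direction at wstar is zero in inner product
  have hmean0 : ∑ s, ∑ s', (μ s * P s s') * ⟪v, tdDir φ r γ s s' wstar⟫ = 0 := by
    have h := congrArg (fun u => ⟪v, u⟫) hstar
    simp only [meanDir, inner_sum, real_inner_smul_right, inner_zero_right] at h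
    exact h
  -- bound on S1
  have H1 : ∑ s, ∑ s', (μ s * P s s') * ⟪v, tdDir φ r γ s s' w⟫ ≤ -((1 - γ) * A) := by
    have hrw : ∀ s s', (μ s * P s s') * ⟪v, tdDir φ r γ s s' w⟫ =
        (μ s * P s s') * ⟪v, tdDir φ r γ s s' wstar⟫ +
          (μ s * P s s') * ((γ * ⟪v, φ s'⟫ - ⟪v, φ s⟫) * ⟪v, φ s⟫) := by
      intro s s'
      rw [key s s', inner_add_right, real_inner_smul_right]; ring
    simp_rw [hrw]
    rw [Finset.sum_congr rfl (fun s _ => Finset.sum_add_distrib),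
      Finset.sum_add_distrib, hmean0, zero_add]
    have step : ∑ s, ∑ s', (μ s * P s s') * ((γ * ⟪v, φ s'⟫ - ⟪v, φ s⟫) * ⟪v, φ s⟫) ≤
        ∑ s, ∑ s', ((μ s * P s s') * ((γ/2) * ⟪v, φ s'⟫ ^ 2) +
          ((μ s * P s s') * ((γ/2) * ⟪v, φ s⟫ ^ 2) - (μ s * P s s') * ⟪v, φ s⟫ ^ 2)) := by
      refine Finset.sum_le_sum fun s _ => Finset.sum_le_sum fun s' _ => ?_
      have hq : (γ * ⟪v, φ s'⟫ - ⟪v, φ s⟫) * ⟪v, φ s⟫ ≤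
          (γ/2) * ⟪v, φ s'⟫ ^ 2 + ((γ/2) * ⟪v, φ s⟫ ^ 2 - ⟪v, φ s⟫ ^ 2) := by
        nlinarith [sq_nonneg (⟪v, φ s'⟫ - ⟪v, φ s⟫), hγ.1]
      nlinarith [mul_le_mul_of_nonneg_left hq (hp s s')]
    refine le_trans step ?_
    have e1 : ∑ s, ∑ s', ((μ s * P s s') * ((γ/2) * ⟪v, φ s'⟫ ^ 2) +
        ((μ s * P s s') * ((γ/2) * ⟪v, φ s⟫ ^ 2) - (μ s * P s s') * ⟪v, φ s⟫ ^ 2)) =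
        (γ/2) * (∑ s, ∑ s', (μ s * P s s') * ⟪v, φ s'⟫ ^ 2) +
        ((γ/2) * (∑ s, ∑ s', (μ s * P s s') * ⟪v, φ s⟫ ^ 2) -
          ∑ s, ∑ s', (μ s * P s s') * ⟪v, φ s⟫ ^ 2) := by
      rw [Finset.mul_sum, Finset.mul_sum, ← Finset.sum_sub_distrib, ← Finset.sum_add_distrib]
      refine Finset.sum_congr rfl fun s _ => ?_
      rw [Finset.mul_sum, Finset.mul_sum, ← Finset.sum_sub_distrib, ← Finset.sum_add_distrib]
      exact Finset.sum_congr rfl fun s' _ => by ring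
    rw [e1, hstatA, hPA]; nlinarith [hA0]
  -- bound on S2
  have H2 : ∑ s, ∑ s', (μ s * P s s') * ‖tdDir φ r γ s s' w‖ ^ 2 ≤ 8 * A + 2 * σ2 := by
    have step : ∑ s, ∑ s', (μ s * P s s') * ‖tdDir φ r γ s s' w‖ ^ 2 ≤
        ∑ s, ∑ s', ((μ s * P s s') * (4 * ⟪v, φ s'⟫ ^ 2) +
          ((μ s * P s s') * (4 * ⟪v, φ s⟫ ^ 2) +
            2 * ((μ s * P s s') * ‖tdDir φ r γ s s' wstar‖ ^ 2))) := by
      refine Finset.sum_le_sum fun s _ => Finset.sum_le_sum fun s' _ => ?_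
      have h1 : ‖tdDir φ r γ s s' w‖ ^ 2 ≤
          2 * ‖(γ * ⟪v, φ s'⟫ - ⟪v, φ s⟫) • φ s‖ ^ 2 + 2 * ‖tdDir φ r γ s s' wstar‖ ^ 2 := by
        rw [key s s', add_comm]
        exact norm_add_sq_le_two _ _
      have h2 : ‖(γ * ⟪v, φ s'⟫ - ⟪v, φ s⟫) • φ s‖ ^ 2 ≤
          2 * ⟪v, φ s'⟫ ^ 2 + 2 * ⟪v, φ s⟫ ^ 2 := by
        rw [norm_smul, mul_pow, Real.norm_eq_abs, sq_abs]
        have hφ1 : ‖φ s‖ ^ 2 ≤ 1 := by nlinarith [hφ s, norm_nonneg (φ s)]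
        have h0 : (γ * ⟪v, φ s'⟫ - ⟪v, φ s⟫) ^ 2 * ‖φ s‖ ^ 2 ≤
            (γ * ⟪v, φ s'⟫ - ⟪v, φ s⟫) ^ 2 :=
          mul_le_of_le_one_right (sq_nonneg _) hφ1
        have hc : (γ * ⟪v, φ s'⟫ - ⟪v, φ s⟫) ^ 2 ≤
            2 * ⟪v, φ s'⟫ ^ 2 + 2 * ⟪v, φ s⟫ ^ 2 := by
          nlinarith [mul_nonneg hγ.1.le (sq_nonneg (⟪v, φ s'⟫ + ⟪v, φ s⟫)),
            mul_nonneg hγ.1.le (sq_nonneg (⟪v, φ s'⟫ - ⟪v, φ s⟫)),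
            mul_nonneg (mul_nonneg (by linarith [hγ.2] : (0:ℝ) ≤ 1 - γ)
              (by linarith [hγ.1] : (0:ℝ) ≤ 1 + γ)) (sq_nonneg (⟪v, φ s'⟫))]
        linarith
      have h3 : ‖tdDir φ r γ s s' w‖ ^ 2 ≤
          4 * ⟪v, φ s'⟫ ^ 2 + 4 * ⟪v, φ s⟫ ^ 2 + 2 * ‖tdDir φ r γ s s' wstar‖ ^ 2 := by
        nlinarith
      nlinarith [mul_le_mul_of_nonneg_left h3 (hp s s')]
    refine le_trans step ?_
    have e1 : ∑ s, ∑ s', ((μ s * P s s') * (4 * ⟪v, φ s'⟫ ^ 2) +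
        ((μ s * P s s') * (4 * ⟪v, φ s⟫ ^ 2) +
          2 * ((μ s * P s s') * ‖tdDir φ r γ s s' wstar‖ ^ 2))) =
        4 * (∑ s, ∑ s', (μ s * P s s') * ⟪v, φ s'⟫ ^ 2) +
        (4 * (∑ s, ∑ s', (μ s * P s s') * ⟪v, φ s⟫ ^ 2) + 2 * σ2) := by
      rw [hσ2def, Finset.mul_sum, Finset.mul_sum, Finset.mul_sum, ← Finset.sum_add_distrib,
        ← Finset.sum_add_distrib]
      refine Finset.sum_congr rfl fun s _ => ?_
      rw [Finset.mul_sum, Finset.mul_sum, Finset.mul_sum, ← Finset.sum_add_distrib,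
        ← Finset.sum_add_distrib]
      exact Finset.sum_congr rfl fun s' _ => by ring
    rw [e1, hstatA, hPA]; linarith
  -- expansion of the squared norm
  have hexp : ∀ s s', ‖(w + η • tdDir φ r γ s s' w) - wstar‖ ^ 2 =
      ‖v‖ ^ 2 + 2 * (η * ⟪v, tdDir φ r γ s s' w⟫) + η ^ 2 * ‖tdDir φ r γ s s' w‖ ^ 2 := by
    intro s s'
    have harr : (w + η • tdDir φ r γ s s' w) - wstar = v + η • tdDir φ r γ s s' w := by
      rw [hv]; abel
    rw [harr, norm_add_sq_real, real_inner_smul_right, norm_smul, Real.norm_eq_abs, mul_pow, sq_abs]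
  have hsplit : ∑ s, ∑ s', (μ s * P s s') * ‖(w + η • tdDir φ r γ s s' w) - wstar‖ ^ 2 =
      ‖v‖ ^ 2 + 2 * η * (∑ s, ∑ s', (μ s * P s s') * ⟪v, tdDir φ r γ s s' w⟫) +
        η ^ 2 * (∑ s, ∑ s', (μ s * P s s') * ‖tdDir φ r γ s s' w‖ ^ 2) := by
    have e1 : ∑ s, ∑ s', (μ s * P s s') * ‖(w + η • tdDir φ r γ s s' w) - wstar‖ ^ 2 =
        ∑ s, ∑ s', ((μ s * P s s') * ‖v‖ ^ 2 +
          (2 * η * ((μ s * P s s') * ⟪v, tdDir φ r γ s s' w⟫) +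
            η ^ 2 * ((μ s * P s s') * ‖tdDir φ r γ s s' w‖ ^ 2))) := by
      refine Finset.sum_congr rfl fun s _ => Finset.sum_congr rfl fun s' _ => ?_
      rw [hexp s s']; ring
    rw [e1]
    simp only [Finset.sum_add_distrib, ← Finset.mul_sum, ← Finset.sum_mul]
    have hone : (∑ i : S, μ i * ∑ i_1 : S, P i i_1) = 1 := by
      simp_rw [hProw, mul_one]; exact hμsum
    rw [hone]
    ring
  rw [hsplit]
  have hvA := hcov v
  have h1 : η * (1 - γ) * (ω * ‖v‖ ^ 2) ≤ η * (1 - γ) * A :=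
    mul_le_mul_of_nonneg_left (hcov v) (by nlinarith [hη.1])
  have h2 : 8 * η ^ 2 * A ≤ η * (1 - γ) * A := by
    have : 8 * η ^ 2 ≤ η * (1 - γ) := by nlinarith [hη.1, hη.2]
    exact mul_le_mul_of_nonneg_right this hA0
  have hS1 := H1
  have hS2 := H2
  have b1 : 2 * η * (∑ s, ∑ s', (μ s * P s s') * ⟪v, tdDir φ r γ s s' w⟫) ≤
      2 * η * (-((1 - γ) * A)) :=
    mul_le_mul_of_nonneg_left hS1 (by linarith [hη.1])
  have b2 : η ^ 2 * (∑ s, ∑ s', (μ s * P s s') * ‖tdDir φ r γ s s' w‖ ^ 2) ≤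
      η ^ 2 * (8 * A + 2 * σ2) :=
    mul_le_mul_of_nonneg_left hS2 (sq_nonneg η)
  nlinarith [b1, b2, h1, h2]

noncomputable def extq {α : Type*} (a₀ : α) : {t : ℕ} → (Fin t → α) → ℕ → α :=
  fun {t} q i => if h : 1 ≤ i ∧ i ≤ t then q ⟨i - 1, by omega⟩ else a₀

lemma extq_pos {α : Type*} (a₀ : α) {t : ℕ} (q : Fin t → α) {i : ℕ}
    (h1 : 1 ≤ i) (h2 : i ≤ t) : extq a₀ q i = q ⟨i - 1, by omega⟩ :=
  dif_pos ⟨h1, h2⟩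

lemma extq_snoc_lt {α : Type*} (a₀ : α) {t : ℕ} (q : Fin t → α) (a : α) {i : ℕ}
    (h1 : 1 ≤ i) (h2 : i ≤ t) : extq a₀ (Fin.snoc q a) i = extq a₀ q i := by
  rw [extq_pos a₀ _ h1 (le_trans h2 (Nat.le_succ t)), extq_pos a₀ q h1 h2]
  have h3 : (⟨i - 1, by omega⟩ : Fin (t + 1)) =
      Fin.castSucc (⟨i - 1, by omega⟩ : Fin t) := rfl
  rw [h3, Fin.snoc_castSucc]

lemma extq_snoc_last {α : Type*} (a₀ : α) {t : ℕ} (q : Fin t → α) (a : α) :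
    extq a₀ (Fin.snoc q a) (t + 1) = a := by
  rw [extq_pos a₀ _ (by omega) (le_refl _)]
  have h3 : (⟨t + 1 - 1, by omega⟩ : Fin (t + 1)) = Fin.last t := by
    ext; simp
  rw [h3, Fin.snoc_last]

set_option maxHeartbeats 1600000 in
/-- TD(0) with i.i.d. sampling from the stationary distribution and a
constant step-size `0 < η ≤ (1−γ)/8` satisfies, for every horizon `T`,
`E[‖w_{T+1} − w*‖²] ≤ exp(−η(1−γ)ω T) ‖w_1 − w*‖² + 2ησ²/((1−γ)ω)`.
The i.i.d. law of the sample path `(s_t, s_t')_{t ≥ 1}` is encoded through its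
cylinder probabilities. -/
theorem td0_iid_constant_step
    {S : Type*} [Fintype S] [MeasurableSpace S] {d : ℕ}
    (P : S → S → ℝ) (μ : S → ℝ) (φ : S → EuclideanSpace ℝ (Fin d))
    (r : S → ℝ) (γ ω η : ℝ) (wstar : EuclideanSpace ℝ (Fin d))
    (hP : ∀ s s', 0 ≤ P s s') (hProw : ∀ s, ∑ s', P s s' = 1)
    (hμ : ∀ s, 0 ≤ μ s) (hμsum : ∑ s, μ s = 1)
    (hstat : ∀ s', ∑ s, μ s * P s s' = μ s')
    (hφ : ∀ s, ‖φ s‖ ≤ 1)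
    (hr : ∀ s, 0 ≤ r s ∧ r s ≤ 1)
    (hγ : 0 < γ ∧ γ ≤ 1) (hω : 0 < ω ∧ ω ≤ 1)
    (hcov : ∀ v : EuclideanSpace ℝ (Fin d), ω * ‖v‖ ^ 2 ≤ ∑ s, μ s * ⟪v, φ s⟫ ^ 2)
    (hstar : meanDir P μ φ r γ wstar = 0)
    (hη : 0 < η ∧ η ≤ (1 - γ) / 8)
    -- the law ℙ of the i.i.d. sample path `(s_t, s_t')_{t ≥ 1}`
    (ℙ : Measure (ℕ → S × S)) [IsProbabilityMeasure ℙ]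
    (hiid : ∀ (n : ℕ) (q : ℕ → S × S),
      ℙ {σ | ∀ i, 1 ≤ i → i ≤ n → σ i = q i} =
        ∏ i ∈ Finset.Icc 1 n, ENNReal.ofReal (μ (q i).1 * P (q i).1 (q i).2))
    -- the TD(0) iterates along a sample path
    (w1 : EuclideanSpace ℝ (Fin d)) (w : ℕ → (ℕ → S × S) → EuclideanSpace ℝ (Fin d))
    (hw1 : ∀ σ, w 1 σ = w1)
    (hrec : ∀ t, 1 ≤ t → ∀ σ,
      w (t + 1) σ = w t σ + η • tdDir φ r γ (σ t).1 (σ t).2 (w t σ))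
    (T : ℕ) :
    ∫ σ, ‖w (T + 1) σ - wstar‖ ^ 2 ∂ℙ ≤
      Real.exp (-(η * (1 - γ) * ω * T)) * ‖w1 - wstar‖ ^ 2 +
        2 * η * (∑ s, ∑ s', μ s * P s s' * ‖tdDir φ r γ s s' wstar‖ ^ 2) /
          ((1 - γ) * ω) := by
  classical
  have hγlt : γ < 1 := by nlinarith [hη.1, hη.2]
  have hSne : Nonempty S := by
    rcases isEmpty_or_nonempty S with h | h
    · exfalso
      rw [Finset.univ_eq_empty, Finset.sum_empty] at hμsum
      exact one_ne_zero hμsum.symm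
    · exact h
  obtain ⟨s₀⟩ := hSne
  set a₀ : S × S := (s₀, s₀) with ha₀
  set p : S × S → ℝ := fun a => μ a.1 * P a.1 a.2 with hpdef
  have hp0 : ∀ a, 0 ≤ p a := fun a => mul_nonneg (hμ a.1) (hP a.1 a.2)
  have hpsum : ∑ a : S × S, p a = 1 := by
    rw [Fintype.sum_prod_type]
    simp_rw [hpdef, ← Finset.mul_sum, hProw, mul_one]
    exact hμsum
  set sg2 : ℝ := ∑ s, ∑ s', μ s * P s s' * ‖tdDir φ r γ s s' wstar‖ ^ 2 with hsg2def
  have hsg20 : 0 ≤ sg2 := Finset.sum_nonneg fun s _ => Finset.sum_nonneg fun s' _ =>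
    mul_nonneg (mul_nonneg (hμ s) (hP s s')) (sq_nonneg _)
  -- trajectory depends only on coordinates 1..t-1
  have hdep : ∀ t, 1 ≤ t → ∀ σ σ' : ℕ → S × S,
      (∀ i, 1 ≤ i → i < t → σ i = σ' i) → w t σ = w t σ' := by
    intro t
    induction t with
    | zero => omega
    | succ n ih =>
      intro _ σ σ' h
      rcases Nat.eq_zero_or_pos n with hn | hn
      · subst hn; rw [hw1, hw1]
      · rw [hrec n hn σ, hrec n hn σ',
          ih hn σ σ' (fun i h1 h2 => h i h1 (by omega)), h n hn (by omega)]
  -- weights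
  have hPi0 : ∀ {t : ℕ} (q : Fin t → S × S), 0 ≤ ∏ j, p (q j) :=
    fun q => Finset.prod_nonneg fun j _ => hp0 _
  have hPisum : ∀ t : ℕ, ∑ q : Fin t → S × S, ∏ j, p (q j) = 1 := by
    intro t
    have h := Finset.prod_univ_sum (fun _ : Fin t => (Finset.univ : Finset (S × S)))
      (fun _ a => p a)
    rw [Fintype.piFinset_univ] at h
    rw [← h]
    simp [hpsum]
  -- the error sequence
  set e : ℕ → ℝ :=
    fun t => ∑ q : Fin t → S × S, (∏ j, p (q j)) * ‖w (t + 1) (extq a₀ q) - wstar‖ ^ 2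
    with hedef
  have he0 : e 0 = ‖w1 - wstar‖ ^ 2 := by
    simp only [hedef]
    have h1 : ∀ q : Fin 0 → S × S,
        (∏ j, p (q j)) * ‖w (0 + 1) (extq a₀ q) - wstar‖ ^ 2 = ‖w1 - wstar‖ ^ 2 := by
      intro q
      rw [hw1 (extq a₀ q)]
      simp
    rw [Finset.sum_congr rfl fun q _ => h1 q, Finset.sum_const, Finset.card_univ]
    simp
  have he0nn : 0 ≤ e 0 := by rw [he0]; positivity
  -- one-step recursion
  have hstep : ∀ t : ℕ, e (t + 1) ≤ (1 - η * (1 - γ) * ω) * e t + 2 * η ^ 2 * sg2 := by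
    intro t
    have hsum_snoc : e (t + 1) = ∑ q : Fin t → S × S, ∑ a : S × S,
        (∏ j, p ((Fin.snoc q a : Fin (t + 1) → S × S) j)) * ‖w (t + 1 + 1) (extq a₀ (Fin.snoc q a)) - wstar‖ ^ 2 := by
      simp only [hedef]
      rw [← Equiv.sum_comp (Fin.snocEquiv (fun _ : Fin (t + 1) => S × S))
        (fun q : Fin (t + 1) → S × S =>
          (∏ j, p (q j)) * ‖w (t + 1 + 1) (extq a₀ q) - wstar‖ ^ 2)]
      rw [Fintype.sum_prod_type]
      rw [Finset.sum_comm]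
      refine Finset.sum_congr rfl fun q _ => Finset.sum_congr rfl fun a _ => ?_
      rfl
    have hprod : ∀ (q : Fin t → S × S) (a : S × S),
        ∏ j, p ((Fin.snoc q a : Fin (t + 1) → S × S) j) = (∏ j, p (q j)) * p a := by
      intro q a
      rw [Fin.prod_univ_castSucc]
      simp [Fin.snoc_castSucc, Fin.snoc_last]
    have htraj : ∀ (q : Fin t → S × S) (a : S × S),
        w (t + 1 + 1) (extq a₀ (Fin.snoc q a)) =
          w (t + 1) (extq a₀ q) +
            η • tdDir φ r γ a.1 a.2 (w (t + 1) (extq a₀ q)) := by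
      intro q a
      rw [hrec (t + 1) (by omega)]
      have h1 : extq a₀ (Fin.snoc q a) (t + 1) = a := extq_snoc_last a₀ q a
      have h2 : w (t + 1) (extq a₀ (Fin.snoc q a)) = w (t + 1) (extq a₀ q) :=
        hdep (t + 1) (by omega) _ _
          (fun i hi1 hi2 => extq_snoc_lt a₀ q a hi1 (by omega))
      rw [h1, h2]
    calc e (t + 1)
        = ∑ q : Fin t → S × S, (∏ j, p (q j)) *
            (∑ a : S × S, p a *
              ‖(w (t + 1) (extq a₀ q) +
                η • tdDir φ r γ a.1 a.2 (w (t + 1) (extq a₀ q))) - wstar‖ ^ 2) := by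
          rw [hsum_snoc]
          refine Finset.sum_congr rfl fun q _ => ?_
          rw [Finset.mul_sum]
          refine Finset.sum_congr rfl fun a _ => ?_
          rw [hprod q a, htraj q a]
          ring
      _ ≤ ∑ q : Fin t → S × S, (∏ j, p (q j)) *
            ((1 - η * (1 - γ) * ω) * ‖w (t + 1) (extq a₀ q) - wstar‖ ^ 2 +
              2 * η ^ 2 * sg2) := by
          refine Finset.sum_le_sum fun q _ => mul_le_mul_of_nonneg_left ?_ (hPi0 q)
          rw [Fintype.sum_prod_type]
          exact td_step_bound P μ φ r γ ω η wstar hP hProw hμ hμsum hstat hφ hγ hω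
            hcov hstar hη (w (t + 1) (extq a₀ q))
      _ = (1 - η * (1 - γ) * ω) * e t + 2 * η ^ 2 * sg2 := by
          have hr2 : ∀ q : Fin t → S × S, (∏ j, p (q j)) *
              ((1 - η * (1 - γ) * ω) * ‖w (t + 1) (extq a₀ q) - wstar‖ ^ 2 +
                2 * η ^ 2 * sg2) =
              (1 - η * (1 - γ) * ω) *
                ((∏ j, p (q j)) * ‖w (t + 1) (extq a₀ q) - wstar‖ ^ 2) +
              (∏ j, p (q j)) * (2 * η ^ 2 * sg2) := fun q => by ring
          rw [Finset.sum_congr rfl fun q _ => hr2 q, Finset.sum_add_distrib,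
            ← Finset.mul_sum, ← Finset.sum_mul, hPisum t, one_mul]
  -- unrolled bound
  set β : ℝ := η * (1 - γ) * ω with hβdef
  have hβpos : 0 < β := by
    rw [hβdef]
    exact mul_pos (mul_pos hη.1 (by linarith)) hω.1
  have hβle : β ≤ 1 := by
    rw [hβdef]
    have h1 : (0:ℝ) < 1 - γ := by linarith
    have h2 : η * (1 - γ) ≤ 1 := by nlinarith [hη.1, hη.2, hγ.1]
    nlinarith [hω.1, hω.2, mul_nonneg hη.1.le h1.le]
  set cc : ℝ := 2 * η ^ 2 * sg2 with hccdef
  have hcc0 : 0 ≤ cc := by positivity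
  have hunroll : ∀ t : ℕ, e t ≤ (1 - β) ^ t * e 0 + cc / β := by
    intro t
    induction t with
    | zero =>
      have : e 0 ≤ e 0 + cc / β := le_add_of_nonneg_right (div_nonneg hcc0 hβpos.le)
      simpa using this
    | succ n ih =>
      have h1 : e (n + 1) ≤ (1 - β) * e n + cc := hstep n
      have h2 : (1 - β) * e n ≤ (1 - β) * ((1 - β) ^ n * e 0 + cc / β) :=
        mul_le_mul_of_nonneg_left ih (by linarith)
      have h3 : (1 - β) * ((1 - β) ^ n * e 0 + cc / β) + cc =
          (1 - β) ^ (n + 1) * e 0 + cc / β := by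
        field_simp
        ring
      linarith
  -- the integral equals e T
  set A : (Fin T → S × S) → Set (ℕ → S × S) :=
    fun q => {σ | ∀ i, 1 ≤ i → i ≤ T → σ i = extq a₀ q i} with hAdef
  set cq : (Fin T → S × S) → ℝ := fun q => ‖w (T + 1) (extq a₀ q) - wstar‖ ^ 2 with hcqdef
  have hmeasA : ∀ q : Fin T → S × S, ℙ (A q) = ENNReal.ofReal (∏ j, p (q j)) := by
    intro q
    have h0 := hiid T (extq a₀ q)
    rw [hAdef]
    rw [h0]
    have h1 : ∀ i ∈ Finset.Icc 1 T,
        ENNReal.ofReal (μ (extq a₀ q i).1 * P (extq a₀ q i).1 (extq a₀ q i).2) =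
          ENNReal.ofReal (p (extq a₀ q i)) := fun i _ => rfl
    rw [Finset.prod_congr rfl h1]
    calc ∏ i ∈ Finset.Icc 1 T, ENNReal.ofReal (p (extq a₀ q i))
        = ∏ i ∈ Finset.Ico 1 (T + 1), ENNReal.ofReal (p (extq a₀ q i)) := by
          rw [Finset.Ico_add_one_right_eq_Icc]
      _ = ∏ i ∈ Finset.range (T + 1 - 1), ENNReal.ofReal (p (extq a₀ q (1 + i))) :=
          Finset.prod_Ico_eq_prod_range _ _ _
      _ = ∏ j : Fin T, ENNReal.ofReal (p (extq a₀ q (1 + (j : ℕ)))) := by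
          rw [Nat.add_sub_cancel]
          exact (Fin.prod_univ_eq_prod_range (fun i => ENNReal.ofReal (p (extq a₀ q (1 + i)))) T).symm
      _ = ∏ j : Fin T, ENNReal.ofReal (p (q j)) := by
          refine Finset.prod_congr rfl fun j _ => ?_
          rw [extq_pos a₀ q (by omega) (by omega)]
          exact congrArg (fun z : Fin T => ENNReal.ofReal (p (q z)))
            (Fin.ext (by simp only [Fin.val_mk]; omega))
      _ = ENNReal.ofReal (∏ j, p (q j)) :=
          (ENNReal.ofReal_prod_of_nonneg fun j _ => hp0 _).symm
  set rst : (ℕ → S × S) → (Fin T → S × S) := fun σ j => σ ((j : ℕ) + 1) with hrstdef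
  have hmem : ∀ (σ : ℕ → S × S) (q : Fin T → S × S), σ ∈ A q ↔ q = rst σ := by
    intro σ q
    constructor
    · intro h
      funext j
      have h2 := h ((j : ℕ) + 1) (by omega) (by omega)
      rw [extq_pos a₀ q (by omega) (by omega)] at h2
      have h3 : (⟨(j : ℕ) + 1 - 1, by omega⟩ : Fin T) = j := by ext; simp
      rw [h3] at h2
      exact h2.symm
    · rintro rfl i h1 h2
      rw [extq_pos a₀ _ h1 h2]
      show σ i = σ ((i - 1 : ℕ) + 1)
      congr 1
      omega
  have hcover : ∀ σ, σ ∈ A (rst σ) := fun σ => (hmem σ (rst σ)).2 rfl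
  have hsumAmeas : ∑ q : Fin T → S × S, ℙ (A q) = 1 := by
    rw [Finset.sum_congr rfl fun q _ => hmeasA q,
      ← ENNReal.ofReal_sum_of_nonneg fun q _ => hPi0 q, hPisum T, ENNReal.ofReal_one]
  -- each A q is a.e. equal to a measurable set
  have hC : ∀ q : Fin T → S × S, ∃ C : Set (ℕ → S × S),
      MeasurableSet C ∧ A q =ᵐ[ℙ] C := by
    intro q
    set B := MeasureTheory.toMeasurable ℙ (A q) with hBdef
    set B' := MeasureTheory.toMeasurable ℙ (A q)ᶜ with hB'def
    have hcompl : ℙ (A q)ᶜ ≤ ∑ q' ∈ Finset.univ.erase q, ℙ (A q') := by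
      refine le_trans (measure_mono ?_) (measure_biUnion_finset_le _ _)
      intro σ hσ
      simp only [Set.mem_compl_iff] at hσ
      refine Set.mem_biUnion (Finset.mem_erase.2 ⟨?_, Finset.mem_univ _⟩) (hcover σ)
      intro hEq
      exact hσ (hEq ▸ hcover σ)
    have htot : ℙ (A q) + ℙ (A q)ᶜ = 1 := by
      apply le_antisymm
      · calc ℙ (A q) + ℙ (A q)ᶜ ≤ ℙ (A q) + ∑ q' ∈ Finset.univ.erase q, ℙ (A q') :=
            add_le_add (le_refl _) hcompl
          _ = ∑ q' : Fin T → S × S, ℙ (A q') :=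
            Finset.add_sum_erase Finset.univ (fun q' => ℙ (A q')) (Finset.mem_univ q)
          _ = 1 := hsumAmeas
      · calc (1 : ENNReal) = ℙ Set.univ := measure_univ.symm
          _ = ℙ (A q ∪ (A q)ᶜ) := by rw [Set.union_compl_self]
          _ ≤ ℙ (A q) + ℙ (A q)ᶜ := measure_union_le _ _
    have hBunion : B ∪ B' = Set.univ := by
      apply Set.eq_univ_of_univ_subset
      rw [← Set.union_compl_self (A q)]
      exact Set.union_subset_union (MeasureTheory.subset_toMeasurable _ _)
        (MeasureTheory.subset_toMeasurable _ _)
    have hBB' : ℙ (B ∩ B') = 0 := by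
      have h1 : ℙ (B ∪ B') + ℙ (B ∩ B') = ℙ B + ℙ B' :=
        measure_union_add_inter B (measurableSet_toMeasurable _ _)
      rw [hBunion, measure_univ, MeasureTheory.measure_toMeasurable,
        MeasureTheory.measure_toMeasurable, htot] at h1
      have h2 : (1 : ENNReal) + ℙ (B ∩ B') = 1 + 0 := by rw [add_zero]; exact h1
      exact (ENNReal.add_right_inj ENNReal.one_ne_top).1 h2
    refine ⟨B \ B', (measurableSet_toMeasurable _ _).diff (measurableSet_toMeasurable _ _), ?_⟩
    rw [MeasureTheory.ae_eq_set]
    constructor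
    · refine measure_mono_null ?_ hBB'
      rintro σ ⟨hσA, hσn⟩
      have hσB : σ ∈ B := MeasureTheory.subset_toMeasurable _ _ hσA
      refine ⟨hσB, ?_⟩
      by_contra hσB'
      exact hσn ⟨hσB, hσB'⟩
    · refine measure_mono_null ?_ hBB'
      rintro σ ⟨⟨hB1, hnB'⟩, hnA⟩
      exact (hnB' (MeasureTheory.subset_toMeasurable ℙ (A q)ᶜ hnA)).elim
  choose C hCmeas hCae using hC
  -- the integrand as a finite sum of indicators
  have hfun : (fun σ => ‖w (T + 1) σ - wstar‖ ^ 2) =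
      fun σ => ∑ q : Fin T → S × S, (A q).indicator (fun _ => cq q) σ := by
    funext σ
    rw [Finset.sum_eq_single (rst σ)]
    · rw [Set.indicator_of_mem (hcover σ)]
      have h1 : w (T + 1) (extq a₀ (rst σ)) = w (T + 1) σ := by
        refine hdep (T + 1) (by omega) _ _ (fun i hi1 hi2 => ?_)
        rw [extq_pos a₀ _ hi1 (by omega)]
        show σ ((i - 1 : ℕ) + 1) = σ i
        congr 1
        omega
      rw [hcqdef]
      simp only
      rw [h1]
    · intro q _ hq
      refine Set.indicator_of_notMem (fun hmemq => hq ((hmem σ q).1 hmemq)) _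
    · intro h
      exact absurd (Finset.mem_univ _) h
  have hae : (fun σ => ‖w (T + 1) σ - wstar‖ ^ 2) =ᵐ[ℙ]
      fun σ => ∑ q : Fin T → S × S, (C q).indicator (fun _ => cq q) σ := by
    rw [hfun]
    have h1 : ∀ q : Fin T → S × S,
        (A q).indicator (fun _ => cq q) =ᵐ[ℙ] (C q).indicator (fun _ => cq q) :=
      fun q => indicator_ae_eq_of_ae_eq_set (hCae q)
    filter_upwards [MeasureTheory.ae_all_iff.2 h1] with σ hσ
    exact Finset.sum_congr rfl fun q _ => hσ q
  have hint : ∫ σ, ‖w (T + 1) σ - wstar‖ ^ 2 ∂ℙ = e T := by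
    rw [MeasureTheory.integral_congr_ae hae]
    rw [MeasureTheory.integral_finset_sum Finset.univ
      (fun q _ => (MeasureTheory.integrable_const (cq q)).indicator (hCmeas q))]
    have h2 : ∀ q : Fin T → S × S,
        ∫ σ, (C q).indicator (fun _ => cq q) σ ∂ℙ = (∏ j, p (q j)) * cq q := by
      intro q
      rw [MeasureTheory.integral_indicator_const (cq q) (hCmeas q)]
      have h3 : ℙ (C q) = ENNReal.ofReal (∏ j, p (q j)) := by
        rw [← measure_congr (hCae q), hmeasA q]
      rw [measureReal_def, h3, ENNReal.toReal_ofReal (hPi0 q), smul_eq_mul]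
    rw [Finset.sum_congr rfl fun q _ => h2 q]
  -- final assembly
  rw [hint]
  have hfin1 : e T ≤ (1 - β) ^ T * e 0 + cc / β := hunroll T
  have hexp1 : (1 - β) ^ T ≤ Real.exp (-(β * T)) := by
    have h1 : 1 - β ≤ Real.exp (-β) := by
      have := Real.add_one_le_exp (-β)
      linarith
    calc (1 - β) ^ T ≤ Real.exp (-β) ^ T :=
        pow_le_pow_left₀ (by linarith) h1 T
      _ = Real.exp (-(β * T)) := by
        rw [← Real.exp_nat_mul]
        congr 1
        ring
  have hccβ : cc / β = 2 * η * sg2 / ((1 - γ) * ω) := by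
    rw [hccdef, hβdef]
    rw [div_eq_div_iff (by nlinarith [hη.1, hω.1]) (by nlinarith [hω.1])]
    ring
  have hexp2 : (1 - β) ^ T * e 0 ≤ Real.exp (-(β * T)) * e 0 :=
    mul_le_mul_of_nonneg_right hexp1 he0nn
  have hfinal : e T ≤ Real.exp (-(β * T)) * ‖w1 - wstar‖ ^ 2 + 2 * η * sg2 / ((1 - γ) * ω) := by
    rw [← he0, ← hccβ]
    linarith
  calc e T ≤ Real.exp (-(β * T)) * ‖w1 - wstar‖ ^ 2 + 2 * η * sg2 / ((1 - γ) * ω) := hfinal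
    _ = Real.exp (-(η * (1 - γ) * ω * T)) * ‖w1 - wstar‖ ^ 2 +
        2 * η * (∑ s, ∑ s', μ s * P s s' * ‖tdDir φ r γ s s' wstar‖ ^ 2) / ((1 - γ) * ω) := by
      rw [hβdef, hsg2def]
end

section
/- Last-iterate convergence of TD(0) with exponentially decaying step-sizes under i.i.d. sampling: fix T ≥ 3, set α = (1/T)^{1/T}, η₀ = (1−γ)/8, and η_t = η₀ α^t. Let ((s_t, s_t'))_{t≥1} be i.i.d. random pairs with joint law ℙ(s_t = s, s_t' = s') = μ(s)P(s,s'), and define random iterates w_{t+1} = w_t + η_t g_{s_t, s_t'}(w_t) from a deterministic w_1 ∈ ℝ^d. Then E[‖w_{T+1} − w*‖²] ≤ e · ‖w_1 − w*‖² · exp(−η₀ ω (1−γ) · αT / ln T) + (8σ²/(e · (ω(1−γ))²)) · (ln T)²/(α² T), where σ² = ∑_{s,s'} μ(s)P(s,s') ‖g_{s,s'}(w*)‖². -/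
open scoped RealInnerProductSpace BigOperators
open MeasureTheory

set_option maxHeartbeats 1000000 in
lemma td_one_step {S : Type*} [Fintype S] {d : ℕ}
    (P : S → S → ℝ) (μ : S → ℝ) (φ : S → EuclideanSpace ℝ (Fin d))
    (r : S → ℝ) (γ ω : ℝ) (wstar : EuclideanSpace ℝ (Fin d))
    (hP : ∀ s s', 0 ≤ P s s') (hProw : ∀ s, ∑ s', P s s' = 1)
    (hμ : ∀ s, 0 ≤ μ s)  (hμsum : ∑ s, μ s = 1)
    (hstat : ∀ s', ∑ s, μ s * P s s' = μ s')
    (hφ : ∀ s, ‖φ s‖ ≤ 1)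
    (hγ0 : 0 ≤ γ) (hγ1 : γ ≤ 1) (hω0 : 0 < ω)
    (hcov : ∀ v : EuclideanSpace ℝ (Fin d), ω * ‖v‖ ^ 2 ≤ ∑ s, μ s * ⟪v, φ s⟫ ^ 2)
    (hstar : meanDir P μ φ r γ wstar = 0)
    (η : ℝ) (hη0 : 0 ≤ η) (hη8 : 8 * η ≤ 1 - γ)
    (u : EuclideanSpace ℝ (Fin d)) :
    ∑ x : S × S, (μ x.1 * P x.1 x.2) * ‖(u + η • tdDir φ r γ x.1 x.2 u) - wstar‖ ^ 2 ≤
      (1 - η * (ω * (1 - γ))) * ‖u - wstar‖ ^ 2 +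
        2 * η ^ 2 * ∑ x : S × S, (μ x.1 * P x.1 x.2) * ‖tdDir φ r γ x.1 x.2 wstar‖ ^ 2 := by
  classical
  set v := u - wstar with hv
  set p : S × S → ℝ := fun x => μ x.1 * P x.1 x.2 with hp
  set a : S × S → ℝ := fun x => ⟪v, φ x.1⟫ with ha
  set b : S × S → ℝ := fun x => ⟪v, φ x.2⟫ with hb
  set G : S × S → EuclideanSpace ℝ (Fin d) := fun x => tdDir φ r γ x.1 x.2 u with hG
  set Gs : S × S → EuclideanSpace ℝ (Fin d) := fun x => tdDir φ r γ x.1 x.2 wstar with hGs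
  have hp0 : ∀ x : S × S, 0 ≤ p x := fun x => mul_nonneg (hμ _) (hP _ _)
  have hpsum : ∑ x : S × S, p x = 1 := by
    rw [Fintype.sum_prod_type]
    simp only [hp, ← Finset.mul_sum, hProw, mul_one, hμsum]
  -- difference of directions
  have hGdiff : ∀ x : S × S, G x = Gs x + (γ * b x - a x) • φ x.1 := by
    intro x
    simp only [hG, hGs, tdDir, ← add_smul]
    congr 1
    simp only [ha, hb, hv, inner_sub_left]
    ring
  -- marginal sums
  have hmarg : ∀ c : S → ℝ, ∑ x : S × S, p x * c x.1 = ∑ s, μ s * c s := by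
    intro c
    rw [Fintype.sum_prod_type]
    refine Finset.sum_congr rfl fun s _ => ?_
    have : ∀ s' : S, μ s * P s s' * c s = (μ s * c s) * P s s' := fun s' => by ring
    show ∑ s', μ s * P s s' * c s = μ s * c s
    simp_rw [this, ← Finset.mul_sum, hProw, mul_one]
  have hmarg2 : ∀ c : S → ℝ, ∑ x : S × S, p x * c x.2 = ∑ s', μ s' * c s' := by
    intro c
    rw [Fintype.sum_prod_type, Finset.sum_comm]
    refine Finset.sum_congr rfl fun s' _ => ?_
    have : ∀ s : S, μ s * P s s' * c s' = (μ s * P s s') * c s' := fun s => by ring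
    show ∑ s, μ s * P s s' * c s' = μ s' * c s'
    simp_rw [← Finset.sum_mul, hstat]
  set Y : ℝ := ∑ s, μ s * ⟪v, φ s⟫ ^ 2 with hYdef
  have hYa : ∑ x : S × S, p x * (a x) ^ 2 = Y := hmarg (fun s => ⟪v, φ s⟫ ^ 2)
  have hYb : ∑ x : S × S, p x * (b x) ^ 2 = Y := hmarg2 (fun s => ⟪v, φ s⟫ ^ 2)
  have hY0 : 0 ≤ Y := Finset.sum_nonneg fun s _ => mul_nonneg (hμ s) (sq_nonneg _)
  -- Cauchy-Schwarz : X ≤ Y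
  set X : ℝ := ∑ x : S × S, p x * (a x * b x) with hXdef
  have hXY : X ≤ Y := by
    have hcs := Finset.sum_mul_sq_le_sq_mul_sq Finset.univ
      (fun x : S × S => Real.sqrt (p x) * a x) (fun x : S × S => Real.sqrt (p x) * b x)
    have h1 : ∀ x : S × S, (Real.sqrt (p x) * a x) * (Real.sqrt (p x) * b x)
        = p x * (a x * b x) := by
      intro x
      have hs : Real.sqrt (p x) * Real.sqrt (p x) = p x := Real.mul_self_sqrt (hp0 x)
      calc (Real.sqrt (p x) * a x) * (Real.sqrt (p x) * b x)
          = (Real.sqrt (p x) * Real.sqrt (p x)) * (a x * b x) := by ring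
        _ = p x * (a x * b x) := by rw [hs]
    have h2 : ∀ x : S × S, (Real.sqrt (p x) * a x) ^ 2 = p x * (a x) ^ 2 := by
      intro x
      rw [mul_pow, Real.sq_sqrt (hp0 x)]
    have h3 : ∀ x : S × S, (Real.sqrt (p x) * b x) ^ 2 = p x * (b x) ^ 2 := by
      intro x
      rw [mul_pow, Real.sq_sqrt (hp0 x)]
    simp_rw [h1, h2, h3, hYa, hYb] at hcs
    rw [← hXdef] at hcs
    nlinarith [hcs, hY0]
  -- mean direction at wstar vanishes
  have hmean0 : ∑ x : S × S, p x * ⟪v, Gs x⟫ = 0 := by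
    have : ∑ x : S × S, p x * ⟪v, Gs x⟫ = ⟪v, ∑ x : S × S, p x • Gs x⟫ := by
      rw [inner_sum]
      exact Finset.sum_congr rfl fun x _ => (real_inner_smul_right v (Gs x) (p x)).symm
    rw [this]
    have : ∑ x : S × S, p x • Gs x = meanDir P μ φ r γ wstar := by
      rw [meanDir, Fintype.sum_prod_type]
    rw [this, hstar, inner_zero_right]
  -- inner product bound
  have hinner : ∑ x : S × S, p x * ⟪v, G x⟫ ≤ -((1 - γ) * Y) := by
    have e1 : ∀ x : S × S, ⟪v, G x⟫ = ⟪v, Gs x⟫ + (γ * b x - a x) * a x := by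
      intro x
      rw [hGdiff x, inner_add_right, real_inner_smul_right]
    have e2 : ∑ x : S × S, p x * ⟪v, G x⟫
        = ∑ x : S × S, p x * ⟪v, Gs x⟫ + (γ * X - Y) := by
      simp_rw [e1, mul_add, Finset.sum_add_distrib]
      congr 1
      rw [hXdef, ← hYa, Finset.mul_sum, ← Finset.sum_sub_distrib]
      exact Finset.sum_congr rfl fun x _ => by ring
    rw [e2, hmean0, zero_add]
    nlinarith [mul_le_mul_of_nonneg_left hXY hγ0]
  -- norm bound
  set V : ℝ := ∑ x : S × S, p x * ‖Gs x‖ ^ 2 with hVdef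
  have hV0 : 0 ≤ V := Finset.sum_nonneg fun x _ => mul_nonneg (hp0 x) (sq_nonneg _)
  have hnorm : ∑ x : S × S, p x * ‖G x‖ ^ 2 ≤ 8 * Y + 2 * V := by
    have e1 : ∀ x : S × S, ‖G x‖ ^ 2 ≤ 2 * ‖Gs x‖ ^ 2 + (4 * (a x)^2 + 4 * γ^2 * (b x)^2) := by
      intro x
      have hphi : ‖φ x.1‖ ^ 2 ≤ 1 := by
        have h0 := norm_nonneg (φ x.1)
        have h1 := hφ x.1
        nlinarith
      have h4 : ‖(γ * b x - a x) • φ x.1‖ ^ 2 ≤ (γ * b x - a x) ^ 2 := by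
        rw [norm_smul, mul_pow, Real.norm_eq_abs, sq_abs]
        nlinarith [sq_nonneg (γ * b x - a x)]
      have h5 : ‖G x‖ ≤ ‖Gs x‖ + ‖(γ * b x - a x) • φ x.1‖ := by
        rw [hGdiff x]; exact norm_add_le _ _
      have h6 : ‖G x‖ ^ 2 ≤ 2 * ‖Gs x‖ ^ 2 + 2 * ‖(γ * b x - a x) • φ x.1‖ ^ 2 := by
        nlinarith [norm_nonneg (G x), norm_nonneg (Gs x), norm_nonneg ((γ * b x - a x) • φ x.1),
          sq_nonneg (‖Gs x‖ - ‖(γ * b x - a x) • φ x.1‖)]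
      have h7 : (γ * b x - a x) ^ 2 ≤ 2 * (a x)^2 + 2 * γ^2 * (b x)^2 := by
        nlinarith [sq_nonneg (γ * b x + a x)]
      linarith
    have e2 : ∑ x : S × S, p x * ‖G x‖ ^ 2 ≤
        ∑ x : S × S, p x * (2 * ‖Gs x‖ ^ 2 + (4 * (a x)^2 + 4 * γ^2 * (b x)^2)) :=
      Finset.sum_le_sum fun x _ => mul_le_mul_of_nonneg_left (e1 x) (hp0 x)
    have e3 : ∑ x : S × S, p x * (2 * ‖Gs x‖ ^ 2 + (4 * (a x)^2 + 4 * γ^2 * (b x)^2))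
        = 2 * V + (4 * Y + 4 * γ^2 * Y) := by
      have expand : ∀ x : S × S, p x * (2 * ‖Gs x‖ ^ 2 + (4 * (a x)^2 + 4 * γ^2 * (b x)^2))
          = 2 * (p x * ‖Gs x‖ ^ 2) + (4 * (p x * (a x)^2) + (4 * γ^2) * (p x * (b x)^2)) :=
        fun x => by ring
      simp_rw [expand, Finset.sum_add_distrib, ← Finset.mul_sum, hYa, hYb]
      rw [hVdef]
    have hgsq : γ ^ 2 * Y ≤ 1 * Y :=
      mul_le_mul_of_nonneg_right (by nlinarith) hY0
    linarith
  -- expansion of the squared norm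
  have hexp : ∀ x : S × S, ‖(u + η • G x) - wstar‖ ^ 2
      = ‖v‖ ^ 2 + 2 * η * ⟪v, G x⟫ + η ^ 2 * ‖G x‖ ^ 2 := by
    intro x
    have : (u + η • G x) - wstar = v + η • G x := by rw [hv]; abel
    rw [this]
    have hns := norm_add_sq_real v (η • G x)
    rw [real_inner_smul_right, norm_smul, Real.norm_eq_abs] at hns
    rw [hns, mul_pow, sq_abs]
    ring
  have htotal : ∑ x : S × S, p x * ‖(u + η • G x) - wstar‖ ^ 2
      = ‖v‖ ^ 2 + 2 * η * (∑ x : S × S, p x * ⟪v, G x⟫)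
        + η ^ 2 * (∑ x : S × S, p x * ‖G x‖ ^ 2) := by
    simp_rw [hexp, mul_add, Finset.sum_add_distrib, ← Finset.sum_mul, hpsum, one_mul]
    rw [Finset.mul_sum, Finset.mul_sum]
    congr 1
    · congr 1
      exact Finset.sum_congr rfl fun x _ => by ring
    · exact Finset.sum_congr rfl fun x _ => by ring
  show ∑ x : S × S, p x * ‖(u + η • G x) - wstar‖ ^ 2 ≤ (1 - η * (ω * (1 - γ))) * ‖v‖ ^ 2 + 2 * η ^ 2 * V
  rw [htotal]
  have hcv := hcov v
  rw [← hYdef] at hcv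
  have c1 : 2 * η * (∑ x : S × S, p x * ⟪v, G x⟫) ≤ 2 * η * (-((1 - γ) * Y)) :=
    mul_le_mul_of_nonneg_left hinner (by linarith)
  have c2 : η ^ 2 * (∑ x : S × S, p x * ‖G x‖ ^ 2) ≤ η ^ 2 * (8 * Y + 2 * V) :=
    mul_le_mul_of_nonneg_left hnorm (sq_nonneg η)
  have c3 : 8 * (η ^ 2 * Y) ≤ η * ((1 - γ) * Y) := by
    nlinarith [mul_le_mul_of_nonneg_right hη8 (mul_nonneg hη0 hY0)]
  have c4 : η * ((1 - γ) * (ω * ‖v‖ ^ 2)) ≤ η * ((1 - γ) * Y) :=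
    mul_le_mul_of_nonneg_left (mul_le_mul_of_nonneg_left hcv (by linarith)) hη0
  nlinarith [c1, c2, c3, c4]

/-- Pad a finite vector of samples (indexed by `Fin n`, standing for times `1,…,n`)
into a full sample path `ℕ → X`. -/
def pad {X : Type*} (x₀ : X) (n : ℕ) (q : Fin n → X) : ℕ → X :=
  fun j => if h : 1 ≤ j ∧ j ≤ n then q ⟨j - 1, by omega⟩ else x₀

lemma pad_eq {X : Type*} (x₀ : X) (n : ℕ) (q : Fin n → X) {j : ℕ}
    (h1 : 1 ≤ j) (h2 : j ≤ n) : pad x₀ n q j = q ⟨j - 1, by omega⟩ :=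
  dif_pos ⟨h1, h2⟩

lemma pad_snoc_agree {X : Type*} (x₀ : X) (n : ℕ) (q : Fin n → X) (x : X) {j : ℕ}
    (h1 : 1 ≤ j) (h2 : j ≤ n) :
    pad x₀ (n + 1) (Fin.snoc q x) j = pad x₀ n q j := by
  rw [pad_eq x₀ (n+1) _ h1 (by omega), pad_eq x₀ n q h1 h2]
  have hlt : j - 1 < n := by omega
  have : (⟨j - 1, by omega⟩ : Fin (n+1)) = Fin.castSucc ⟨j - 1, hlt⟩ := rfl
  rw [this, Fin.snoc_castSucc]

lemma pad_snoc_last {X : Type*} (x₀ : X) (n : ℕ) (q : Fin n → X) (x : X) :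
    pad x₀ (n + 1) (Fin.snoc q x) (n + 1) = x := by
  rw [pad_eq x₀ (n+1) _ (by omega) (le_refl _)]
  have : (⟨n + 1 - 1, by omega⟩ : Fin (n+1)) = Fin.last n := rfl
  rw [this, Fin.snoc_last]

/-- The iterates only depend on the samples at times `1,…,t-1`. -/
lemma iter_dep {X E : Type*} (G : ℕ → X → E → E) (w : ℕ → (ℕ → X) → E) (w1 : E)
    (hw1 : ∀ σ, w 1 σ = w1)
    (hrec : ∀ t, 1 ≤ t → ∀ σ, w (t + 1) σ = G t (σ t) (w t σ)) :
    ∀ t, 1 ≤ t → ∀ σ σ' : ℕ → X, (∀ i, 1 ≤ i → i < t → σ i = σ' i) → w t σ = w t σ' := by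
  intro t ht
  induction t, ht using Nat.le_induction with
  | base => intro σ σ' _; rw [hw1, hw1]
  | succ t ht ih =>
    intro σ σ' hag
    rw [hrec t ht σ, hrec t ht σ', hag t ht (by omega),
      ih σ σ' (fun i hi1 hi2 => hag i hi1 (by omega))]

/-- Splitting a sum over `Fin (n+1) → X` by the last coordinate. -/
lemma sum_snoc {X : Type*} [Fintype X] {n : ℕ} (F : (Fin (n + 1) → X) → ℝ) :
    ∑ q : Fin (n + 1) → X, F q = ∑ q : Fin n → X, ∑ x : X, F (Fin.snoc q x) := by
  rw [← (Fin.snocEquiv (fun _ => X)).sum_comp F, Fintype.sum_prod_type, Finset.sum_comm]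
  rfl

lemma weight_snoc {X : Type*} [Fintype X] {n : ℕ} (pv : X → ℝ) (q : Fin n → X) (x : X) :
    (∏ i : Fin (n + 1), pv ((Fin.snoc q x : Fin (n + 1) → X) i))
      = (∏ i : Fin n, pv (q i)) * pv x := by
  rw [Fin.prod_univ_castSucc]
  simp [Fin.snoc_castSucc, Fin.snoc_last]

lemma weight_total {X : Type*} [Fintype X] {n : ℕ} (pv : X → ℝ) (hpv1 : ∑ x : X, pv x = 1) :
    ∑ q : Fin n → X, (∏ i : Fin n, pv (q i)) = 1 := by
  classical
  rw [← Fintype.piFinset_univ, ← Finset.prod_univ_sum]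
  simp [hpv1]

/-- Integral of a function depending on finitely many coordinates, under the cylinder
measure description. -/
lemma integral_cylinder {X : Type*} [Fintype X] [MeasurableSpace X] (x₀ : X)
    (pv : X → ℝ) (hpv0 : ∀ x, 0 ≤ pv x) (hpv1 : ∑ x : X, pv x = 1)
    (T : ℕ)
    (ℙ : Measure (ℕ → X)) [IsProbabilityMeasure ℙ]
    (hcyl : ∀ q : Fin T → X,
      ℙ {σ | ∀ i, 1 ≤ i → i ≤ T → σ i = pad x₀ T q i} = ENNReal.ofReal (∏ i, pv (q i)))
    (f : (ℕ → X) → ℝ)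
    (hf : ∀ σ σ' : ℕ → X, (∀ i, 1 ≤ i → i ≤ T → σ i = σ' i) → f σ = f σ') :
    ∫ σ, f σ ∂ℙ = ∑ q : Fin T → X, (∏ i, pv (q i)) * f (pad x₀ T q) := by
  classical
  set C : (Fin T → X) → Set (ℕ → X) :=
    fun q => {σ | ∀ i, 1 ≤ i → i ≤ T → σ i = pad x₀ T q i} with hCdef
  set B : (Fin T → X) → Set (ℕ → X) := fun q => toMeasurable ℙ (C q) with hBdef
  have hBmeas : ∀ q, MeasurableSet (B q) := fun q => measurableSet_toMeasurable _ _
  have hCB : ∀ q, C q ⊆ B q := fun q => subset_toMeasurable _ _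
  have hPB : ∀ q, ℙ (B q) = ENNReal.ofReal (∏ i, pv (q i)) := fun q => by
    rw [hBdef]; rw [measure_toMeasurable]; exact hcyl q
  set qof : (ℕ → X) → (Fin T → X) := fun σ i => σ (i + 1) with hqof
  have hmem : ∀ σ, σ ∈ C (qof σ) := by
    intro σ i h1 h2
    rw [pad_eq x₀ T _ h1 h2, hqof]
    simp only
    congr 1
    omega
  have hwnn : ∀ q : Fin T → X, 0 ≤ ∏ i, pv (q i) :=
    fun q => Finset.prod_nonneg fun i _ => hpv0 _
  have hPBsum : ∑ q : Fin T → X, ℙ (B q) = 1 := by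
    simp_rw [hPB]
    rw [← ENNReal.ofReal_sum_of_nonneg (fun q _ => hwnn q), weight_total pv hpv1,
      ENNReal.ofReal_one]
  have hnull : ∀ q q' : Fin T → X, q ≠ q' → ℙ (B q ∩ B q') = 0 := by
    intro q q' hne
    have hsplit : ℙ (B q) + ∑ r ∈ Finset.univ.erase q, ℙ (B r) = 1 := by
      rw [← hPBsum]; exact Finset.add_sum_erase Finset.univ (fun r => ℙ (B r)) (Finset.mem_univ q)
    have hcover2 : (Set.univ : Set (ℕ → X)) ⊆
        (B q \ B q') ∪ ⋃ r ∈ Finset.univ.erase q, B r := by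
      intro σ _
      by_cases h : qof σ = q
      · by_cases h' : σ ∈ B q'
        · right
          exact Set.mem_biUnion (Finset.mem_erase.2 ⟨fun hc => hne (hc ▸ rfl), Finset.mem_univ _⟩) h'
        · left
          exact ⟨h ▸ hCB _ (hmem σ), h'⟩
      · right
        exact Set.mem_biUnion (Finset.mem_erase.2 ⟨h, Finset.mem_univ _⟩) (hCB _ (hmem σ))
    have h1le : (1 : ENNReal) ≤ ℙ (B q \ B q') + ∑ r ∈ Finset.univ.erase q, ℙ (B r) := by
      calc (1 : ENNReal) = ℙ Set.univ := (measure_univ).symm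
        _ ≤ ℙ ((B q \ B q') ∪ ⋃ r ∈ Finset.univ.erase q, B r) := measure_mono hcover2
        _ ≤ ℙ (B q \ B q') + ℙ (⋃ r ∈ Finset.univ.erase q, B r) := measure_union_le _ _
        _ ≤ ℙ (B q \ B q') + ∑ r ∈ Finset.univ.erase q, ℙ (B r) := by
            exact add_le_add le_rfl (measure_biUnion_finset_le _ _)
    have hfin : ∑ r ∈ Finset.univ.erase q, ℙ (B r) ≠ ⊤ := by
      intro hc
      rw [hc, add_top] at hsplit
      exact (ENNReal.top_ne_one) hsplit
    have hle : ℙ (B q) ≤ ℙ (B q \ B q') := by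
      rw [← ENNReal.add_le_add_iff_right hfin, hsplit]
      exact h1le
    have hdec : ℙ (B q \ B q') + ℙ (B q ∩ B q') = ℙ (B q) :=
      measure_diff_add_inter (B q) (hBmeas q')
    have hle2 : ℙ (B q \ B q') + ℙ (B q ∩ B q') ≤ ℙ (B q \ B q') + 0 := by
      rw [hdec, add_zero]; exact hle
    exact le_zero_iff.1 (ENNReal.le_of_add_le_add_left (measure_ne_top ℙ _) hle2)
  have hBC : ∀ q, ℙ (B q \ C q) = 0 := by
    intro q
    have hsub : B q \ C q ⊆ ⋃ r, ⋃ (_ : r ≠ q), (B q ∩ B r) := by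
      intro σ hσ
      have h1 : σ ∈ C (qof σ) := hmem σ
      have h2 : qof σ ≠ q := fun h => hσ.2 (h ▸ h1)
      exact Set.mem_iUnion.2 ⟨qof σ, Set.mem_iUnion.2 ⟨h2, hσ.1, hCB _ h1⟩⟩
    refine measure_mono_null hsub (measure_iUnion_null fun r => ?_)
    rw [Set.iUnion_eq_if]
    split_ifs with h
    · exact hnull q r (Ne.symm h)
    · exact measure_empty
  set g : (ℕ → X) → ℝ :=
    fun σ => ∑ q : Fin T → X, Set.indicator (B q) (fun _ => f (pad x₀ T q)) σ with hgdef
  set N : Set (ℕ → X) :=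
    (⋃ q, (B q \ C q)) ∪ ⋃ q, ⋃ r, ⋃ (_ : q ≠ r), (B q ∩ B r) with hNdef
  have hNnull : ℙ N = 0 := by
    refine measure_union_null (measure_iUnion_null fun q => hBC q)
      (measure_iUnion_null fun q => measure_iUnion_null fun r => ?_)
    rw [Set.iUnion_eq_if]
    split_ifs with h
    · exact hnull q r h
    · exact measure_empty
  have hfg : ∀ σ, σ ∉ N → f σ = g σ := by
    intro σ hσ
    have hmemB : σ ∈ B (qof σ) := hCB _ (hmem σ)
    have hnot : ∀ q, q ≠ qof σ → σ ∉ B q := by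
      intro q hq hc
      apply hσ
      right
      exact Set.mem_iUnion.2 ⟨q, Set.mem_iUnion.2 ⟨qof σ, Set.mem_iUnion.2 ⟨hq, hc, hmemB⟩⟩⟩
    rw [hgdef]
    simp only
    rw [Finset.sum_eq_single (qof σ)]
    · rw [Set.indicator_of_mem hmemB]
      exact hf σ (pad x₀ T (qof σ)) (hmem σ)
    · intro q _ hq
      exact Set.indicator_of_notMem (hnot q hq) _
    · intro hc
      exact absurd (Finset.mem_univ _) hc
  have hae : f =ᵐ[ℙ] g := by
    rw [Filter.EventuallyEq, ae_iff]
    refine measure_mono_null (fun σ hσ => ?_) hNnull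
    by_contra hc
    exact hσ (hfg σ hc)
  rw [integral_congr_ae hae, hgdef]
  simp only
  rw [integral_finset_sum Finset.univ (fun q _ =>
    (integrable_indicator_iff (hBmeas q)).2
      (integrableOn_const (measure_ne_top ℙ _)))]
  refine Finset.sum_congr rfl fun q _ => ?_
  rw [integral_indicator_const _ (hBmeas q), measureReal_def, hPB q, smul_eq_mul,
    ENNReal.toReal_ofReal (hwnn q), mul_comm]

lemma exp_neg_le_one_sub_half {x : ℝ} (h0 : 0 ≤ x) (h1 : x ≤ 1) :
    Real.exp (-x) ≤ 1 - x / 2 := by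
  have h2 : x + 1 ≤ Real.exp x := Real.add_one_le_exp x
  have h3 : Real.exp (-x) * Real.exp x = 1 := by
    rw [← Real.exp_add]; simp
  have h4 : 0 < Real.exp (-x) := Real.exp_pos _
  nlinarith [mul_le_mul_of_nonneg_left h2 h4.le]

lemma sq_exp_le {c y : ℝ} (hc : 0 < c) (hy : 0 ≤ y) :
    y ^ 2 * Real.exp (-(c * y)) ≤ 4 / (Real.exp 1 ^ 2 * c ^ 2) := by
  set z : ℝ := c * y / 2 with hz
  have hz0 : 0 ≤ z := by positivity
  have h1 : z ≤ Real.exp (z - 1) := by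
    have := Real.add_one_le_exp (z - 1); linarith
  have h2 : z * Real.exp (-z) ≤ 1 / Real.exp 1 := by
    have h3 : Real.exp (z - 1) * Real.exp (-z) = 1 / Real.exp 1 := by
      rw [← Real.exp_add]
      have : z - 1 + -z = -1 := by ring
      rw [this, Real.exp_neg, one_div]
    calc z * Real.exp (-z) ≤ Real.exp (z - 1) * Real.exp (-z) :=
          mul_le_mul_of_nonneg_right h1 (Real.exp_pos _).le
      _ = 1 / Real.exp 1 := h3
  have h3 : (z * Real.exp (-z)) ^ 2 ≤ (1 / Real.exp 1) ^ 2 :=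
    pow_le_pow_left₀ (mul_nonneg hz0 (Real.exp_pos _).le) h2 2
  have he : Real.exp (-(c * y)) = Real.exp (-z) * Real.exp (-z) := by
    rw [← Real.exp_add]
    congr 1
    rw [hz]; ring
  have hy2 : y ^ 2 * Real.exp (-(c * y)) = (4 / c ^ 2) * (z * Real.exp (-z)) ^ 2 := by
    rw [he, hz]
    field_simp
    ring
  rw [hy2]
  calc (4 / c ^ 2) * (z * Real.exp (-z)) ^ 2 ≤ (4 / c ^ 2) * (1 / Real.exp 1) ^ 2 :=
        mul_le_mul_of_nonneg_left h3 (by positivity)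
    _ = 4 / (Real.exp 1 ^ 2 * c ^ 2) := by
        rw [div_pow, one_pow]
        field_simp

lemma geom_Ioc {α : ℝ} (hα : α ≠ 1) (n : ℕ) :
    ∑ j ∈ Finset.Ioc 0 n, α ^ j = (α - α ^ (n + 1)) / (1 - α) := by
  have h1 : (1 : ℝ) - α ≠ 0 := fun h => hα (by linarith)
  induction n with
  | zero => simp
  | succ n ih =>
    rw [Finset.sum_Ioc_succ_top (Nat.zero_le n), ih]
    field_simp
    ring

lemma unroll_rec (e D c : ℕ → ℝ) (hD : ∀ t, 0 ≤ D t)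
    (hstep : ∀ n, e (n + 1) ≤ D (n + 1) * e n + c (n + 1)) :
    ∀ n, e n ≤ (∏ t ∈ Finset.Ioc 0 n, D t) * e 0 +
      ∑ t ∈ Finset.Ioc 0 n, c t * ∏ j ∈ Finset.Ioc t n, D j := by
  intro n
  induction n with
  | zero => simp
  | succ n ih =>
    have h1 : e (n + 1) ≤ D (n + 1) * e n + c (n + 1) := hstep n
    have h2 : D (n + 1) * e n ≤ D (n + 1) * ((∏ t ∈ Finset.Ioc 0 n, D t) * e 0 +
        ∑ t ∈ Finset.Ioc 0 n, c t * ∏ j ∈ Finset.Ioc t n, D j) :=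
      mul_le_mul_of_nonneg_left ih (hD _)
    have h3 : (∏ t ∈ Finset.Ioc 0 (n + 1), D t) = (∏ t ∈ Finset.Ioc 0 n, D t) * D (n + 1) :=
      Finset.prod_Ioc_succ_top (Nat.zero_le n) D
    have h4 : ∑ t ∈ Finset.Ioc 0 (n + 1), c t * ∏ j ∈ Finset.Ioc t (n + 1), D j
        = D (n + 1) * (∑ t ∈ Finset.Ioc 0 n, c t * ∏ j ∈ Finset.Ioc t n, D j) + c (n + 1) := by
      rw [Finset.sum_Ioc_succ_top (Nat.zero_le n)]
      have h5 : ∀ t ∈ Finset.Ioc 0 n, c t * ∏ j ∈ Finset.Ioc t (n + 1), D j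
          = D (n + 1) * (c t * ∏ j ∈ Finset.Ioc t n, D j) := by
        intro t ht
        rw [Finset.prod_Ioc_succ_top (Finset.mem_Ioc.1 ht).2 D]
        ring
      rw [Finset.sum_congr rfl h5, ← Finset.mul_sum]
      simp
    rw [h3, h4]
    calc e (n + 1) ≤ D (n + 1) * e n + c (n + 1) := h1
      _ ≤ D (n + 1) * ((∏ t ∈ Finset.Ioc 0 n, D t) * e 0 +
          ∑ t ∈ Finset.Ioc 0 n, c t * ∏ j ∈ Finset.Ioc t n, D j) + c (n + 1) := by linarith
      _ = (∏ t ∈ Finset.Ioc 0 n, D t) * D (n + 1) * e 0 +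
          (D (n + 1) * (∑ t ∈ Finset.Ioc 0 n, c t * ∏ j ∈ Finset.Ioc t n, D j) + c (n + 1)) := by
        ring

lemma hb5_aux (e v ee c : ℝ) (hE : ee ≠ 0) (hc : c ≠ 0) :
    (2 * e ^ 2 * v * ee) * (4 / (ee ^ 2 * c ^ 2)) = 8 * v * e ^ 2 / (ee * c ^ 2) := by
  field_simp
  ring

set_option maxHeartbeats 2000000 in
/-- last-iterate convergence of TD(0) with exponentially decaying
step-sizes `η_t = η₀ α^t`, `α = (1/T)^{1/T}`, `η₀ = (1−γ)/8`, under i.i.d. sampling: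
`E[‖w_{T+1} − w*‖²] ≤ e ‖w_1 − w*‖² exp(−η₀ω(1−γ)αT/ln T)
  + (8σ²/(e(ω(1−γ))²)) (ln T)²/(α²T)`. -/
theorem td0_iid_exponential_step
    {S : Type*} [Fintype S] [MeasurableSpace S] {d : ℕ}
    (P : S → S → ℝ) (μ : S → ℝ) (φ : S → EuclideanSpace ℝ (Fin d))
    (r : S → ℝ) (γ ω : ℝ) (wstar : EuclideanSpace ℝ (Fin d))
    (hP : ∀ s s', 0 ≤ P s s') (hProw : ∀ s, ∑ s', P s s' = 1)
    (hμ : ∀ s, 0 ≤ μ s) (hμsum : ∑ s, μ s = 1)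
    (hstat : ∀ s', ∑ s, μ s * P s s' = μ s')
    (hφ : ∀ s, ‖φ s‖ ≤ 1)
    (hr : ∀ s, 0 ≤ r s ∧ r s ≤ 1)
    (hγ : 0 < γ ∧ γ ≤ 1) (hω : 0 < ω ∧ ω ≤ 1)
    (hcov : ∀ v : EuclideanSpace ℝ (Fin d), ω * ‖v‖ ^ 2 ≤ ∑ s, μ s * ⟪v, φ s⟫ ^ 2)
    (hstar : meanDir P μ φ r γ wstar = 0)
    -- horizon and step-size schedule
    (T : ℕ) (hT : 3 ≤ T)
    (α η₀ : ℝ)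
    (hα : α = (1 / (T : ℝ)) ^ ((1 : ℝ) / (T : ℝ)))
    (hη₀ : η₀ = (1 - γ) / 8)
    -- the law ℙ of the i.i.d. sample path `(s_t, s_t')_{t ≥ 1}`
    (ℙ : Measure (ℕ → S × S)) [IsProbabilityMeasure ℙ]
    (hiid : ∀ (n : ℕ) (q : ℕ → S × S),
      ℙ {σ | ∀ i, 1 ≤ i → i ≤ n → σ i = q i} =
        ∏ i ∈ Finset.Icc 1 n, ENNReal.ofReal (μ (q i).1 * P (q i).1 (q i).2))
    -- the TD(0) iterates along a sample path, with step-sizes `η_t = η₀ α^t`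
    (w1 : EuclideanSpace ℝ (Fin d)) (w : ℕ → (ℕ → S × S) → EuclideanSpace ℝ (Fin d))
    (hw1 : ∀ σ, w 1 σ = w1)
    (hrec : ∀ t, 1 ≤ t → ∀ σ,
      w (t + 1) σ = w t σ + (η₀ * α ^ t) • tdDir φ r γ (σ t).1 (σ t).2 (w t σ)) :
    ∫ σ, ‖w (T + 1) σ - wstar‖ ^ 2 ∂ℙ ≤
      Real.exp 1 * ‖w1 - wstar‖ ^ 2 *
          Real.exp (-(η₀ * ω * (1 - γ) * α * T / Real.log T)) +
        (8 * (∑ s, ∑ s', μ s * P s s' * ‖tdDir φ r γ s s' wstar‖ ^ 2) /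
            (Real.exp 1 * (ω * (1 - γ)) ^ 2)) *
          (Real.log T) ^ 2 / (α ^ 2 * T) := by
  classical
  obtain ⟨hγ0, hγ1⟩ := hγ
  obtain ⟨hω0, hω1⟩ := hω
  -- trivial case γ = 1
  by_cases hγeq : γ = 1
  · subst hγeq
    have hη₀0 : η₀ = 0 := by rw [hη₀]; norm_num
    have hwconst : ∀ t, 1 ≤ t → ∀ σ, w t σ = w1 := by
      intro t ht
      induction t, ht using Nat.le_induction with
      | base => exact hw1
      | succ t ht ih =>
        intro σ
        rw [hrec t ht σ, ih σ, hη₀0]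
        simp
    have hLHS : ∫ σ, ‖w (T + 1) σ - wstar‖ ^ 2 ∂ℙ = ‖w1 - wstar‖ ^ 2 := by
      have h1 : ∀ σ : ℕ → S × S, ‖w (T + 1) σ - wstar‖ ^ 2 = ‖w1 - wstar‖ ^ 2 :=
        fun σ => by rw [hwconst (T + 1) (by omega) σ]
      simp_rw [h1]
      simp
    rw [hLHS]
    have h2 : ((1:ℝ) - 1) = 0 := by norm_num
    rw [h2]
    simp only [mul_zero, zero_mul, zero_div, neg_zero, Real.exp_zero, mul_one, ne_eq,
      OfNat.ofNat_ne_zero, not_false_eq_true, zero_pow, div_zero]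
    nlinarith [Real.one_le_exp (le_refl (0:ℝ)) , sq_nonneg ‖w1 - wstar‖,
      Real.one_le_exp (show (0:ℝ) ≤ 1 by norm_num)]
  -- main case: γ < 1
  have hγlt : γ < 1 := lt_of_le_of_ne hγ1 hγeq
  -- nonempty state space
  have hSne : Nonempty S := by
    by_contra h
    have hE : IsEmpty S := not_nonempty_iff.1 h
    rw [Finset.univ_eq_empty, Finset.sum_empty] at hμsum
    norm_num at hμsum
  obtain ⟨s₀⟩ := hSne
  set x₀ : S × S := (s₀, s₀) with hx₀
  set pv : S × S → ℝ := fun x => μ x.1 * P x.1 x.2 with hpv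
  have hpv0 : ∀ x : S × S, 0 ≤ pv x := fun x => mul_nonneg (hμ _) (hP _ _)
  have hpv1 : ∑ x : S × S, pv x = 1 := by
    rw [Fintype.sum_prod_type]
    simp only [hpv, ← Finset.mul_sum, hProw, mul_one, hμsum]
  -- real-number facts
  set Tr : ℝ := (T : ℝ) with hTr
  have hTr3 : (3 : ℝ) ≤ Tr := by rw [hTr]; exact_mod_cast hT
  have hTrpos : (0 : ℝ) < Tr := by linarith
  set lgT : ℝ := Real.log Tr with hlgT
  have hlg1 : (1 : ℝ) ≤ lgT := by
    rw [hlgT, Real.le_log_iff_exp_le hTrpos]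
    linarith [Real.exp_one_lt_d9]
  have hlgpos : (0 : ℝ) < lgT := by linarith
  set xv : ℝ := lgT / Tr with hxv
  have hxv0 : 0 < xv := div_pos hlgpos hTrpos
  have hxv1 : xv ≤ 1 := by
    rw [hxv, div_le_one hTrpos, hlgT]
    linarith [Real.log_le_sub_one_of_pos hTrpos]
  have hαe : α = Real.exp (-xv) := by
    rw [hα, Real.rpow_def_of_pos (by positivity : (0:ℝ) < 1 / (T:ℝ))]
    congr 1
    rw [one_div ((T:ℝ)), Real.log_inv]
    rw [hxv, hlgT, hTr]
    field_simp
  have hα0 : 0 < α := by rw [hαe]; exact Real.exp_pos _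
  have hα1 : α < 1 := by
    rw [hαe, show (1:ℝ) = Real.exp 0 by simp]
    exact Real.exp_lt_exp.2 (by linarith)
  have h1mα0 : 0 < 1 - α := by linarith
  have hαT : α ^ T = 1 / Tr := by
    rw [hαe, ← Real.exp_nat_mul]
    have h1 : (T : ℝ) * -xv = -lgT := by
      rw [hxv, hTr]
      field_simp
    rw [h1, Real.exp_neg, Real.exp_log hTrpos, one_div]
  have h1mα_le : 1 - α ≤ xv := by
    have := Real.add_one_le_exp (-xv)
    rw [← hαe] at this
    linarith
  have h1mα_ge : xv / 2 ≤ 1 - α := by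
    have := exp_neg_le_one_sub_half hxv0.le hxv1
    rw [← hαe] at this
    linarith
  set β : ℝ := ω * (1 - γ) with hβ
  have hβ0 : 0 < β := mul_pos hω0 (by linarith)
  have hβ1 : β ≤ 1 := by
    rw [hβ]
    calc ω * (1 - γ) ≤ 1 * 1 := mul_le_mul hω1 (by linarith) (by linarith) (by norm_num)
      _ = 1 := by norm_num
  have hη₀pos : 0 < η₀ := by rw [hη₀]; linarith
  have hη₀le : η₀ ≤ 1 / 8 := by rw [hη₀]; linarith
  have hαpow1 : ∀ t : ℕ, α ^ t ≤ 1 := fun t => pow_le_one₀ hα0.le hα1.le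
  have hαpow0 : ∀ t : ℕ, 0 < α ^ t := fun t => pow_pos hα0 t
  have hη8 : ∀ t : ℕ, 8 * (η₀ * α ^ t) ≤ 1 - γ := by
    intro t
    have h1 : η₀ * α ^ t ≤ η₀ * 1 := mul_le_mul_of_nonneg_left (hαpow1 t) hη₀pos.le
    rw [mul_one] at h1
    rw [hη₀] at h1 ⊢
    linarith
  have hηt0 : ∀ t : ℕ, 0 ≤ η₀ * α ^ t := fun t => by positivity
  have hba : β * η₀ * α ≤ 1 / 8 := by
    have h1 : β * η₀ ≤ 1 * (1 / 8) := mul_le_mul hβ1 hη₀le hη₀pos.le (by norm_num)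
    have h2 : β * η₀ * α ≤ (1 / 8) * 1 := by
      apply mul_le_mul _ hα1.le hα0.le (by norm_num)
      linarith
    linarith
  have hD0 : ∀ t : ℕ, 0 ≤ 1 - β * (η₀ * α ^ t) := by
    intro t
    have h1 : β * (η₀ * α ^ t) ≤ 1 * (1 / 8 * 1) := by
      apply mul_le_mul hβ1 _ (hηt0 t) (by norm_num)
      apply mul_le_mul hη₀le (hαpow1 t) (hαpow0 t).le (by norm_num)
    linarith
  -- variance at the fixed point
  set Vstar : ℝ := ∑ x : S × S, pv x * ‖tdDir φ r γ x.1 x.2 wstar‖ ^ 2 with hVstar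
  have hV0 : 0 ≤ Vstar :=
    Finset.sum_nonneg fun x _ => mul_nonneg (hpv0 x) (sq_nonneg _)
  have hVeq : Vstar = ∑ s, ∑ s', μ s * P s s' * ‖tdDir φ r γ s s' wstar‖ ^ 2 := by
    rw [hVstar, Fintype.sum_prod_type]
  -- iterate dependence
  have hdep := iter_dep (fun t (x : S × S) u => u + (η₀ * α ^ t) • tdDir φ r γ x.1 x.2 u)
    w w1 hw1 (fun t ht σ => hrec t ht σ)
  -- expectation as a finite sum
  set ee : ℕ → ℝ := fun n => ∑ q : Fin n → S × S,
    (∏ i, pv (q i)) * ‖w (n + 1) (pad x₀ n q) - wstar‖ ^ 2 with heedef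
  have hee0 : ee 0 = ‖w1 - wstar‖ ^ 2 := by
    rw [heedef]
    simp only
    rw [Fintype.sum_unique (fun q : Fin 0 → S × S =>
      (∏ i, pv (q i)) * ‖w (0 + 1) (pad x₀ 0 q) - wstar‖ ^ 2)]
    simp [hw1]
  have heenn : ∀ n, 0 ≤ ee n := by
    intro n
    rw [heedef]
    exact Finset.sum_nonneg fun q _ =>
      mul_nonneg (Finset.prod_nonneg fun i _ => hpv0 _) (sq_nonneg _)
  -- one-step recursion for ee
  have hstep : ∀ n : ℕ, ee (n + 1) ≤ (1 - β * (η₀ * α ^ (n + 1))) * ee n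
      + 2 * (η₀ * α ^ (n + 1)) ^ 2 * Vstar := by
    intro n
    have hsplit : ee (n + 1) = ∑ q : Fin n → S × S, ∑ x : S × S,
        (∏ i, pv ((Fin.snoc q x : Fin (n + 1) → S × S) i)) *
          ‖w (n + 1 + 1) (pad x₀ (n + 1) (Fin.snoc q x)) - wstar‖ ^ 2 := by
      rw [heedef]
      exact sum_snoc (fun q : Fin (n + 1) → S × S =>
        (∏ i, pv (q i)) * ‖w (n + 1 + 1) (pad x₀ (n + 1) q) - wstar‖ ^ 2)
    have hinner : ∀ q : Fin n → S × S,
        ∑ x : S × S, (∏ i, pv ((Fin.snoc q x : Fin (n + 1) → S × S) i)) *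
          ‖w (n + 1 + 1) (pad x₀ (n + 1) (Fin.snoc q x)) - wstar‖ ^ 2
        ≤ (∏ i, pv (q i)) *
            ((1 - (η₀ * α ^ (n + 1)) * (ω * (1 - γ))) * ‖w (n + 1) (pad x₀ n q) - wstar‖ ^ 2
              + 2 * (η₀ * α ^ (n + 1)) ^ 2 * Vstar) := by
      intro q
      have hweq : ∀ x : S × S, w (n + 1 + 1) (pad x₀ (n + 1) (Fin.snoc q x))
          = w (n + 1) (pad x₀ n q)
            + (η₀ * α ^ (n + 1)) • tdDir φ r γ x.1 x.2 (w (n + 1) (pad x₀ n q)) := by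
        intro x
        rw [hrec (n + 1) (by omega), pad_snoc_last]
        have hagree : w (n + 1) (pad x₀ (n + 1) (Fin.snoc q x)) = w (n + 1) (pad x₀ n q) :=
          hdep (n + 1) (by omega) _ _
            (fun i h1 h2 => pad_snoc_agree x₀ n q x h1 (by omega))
        rw [hagree]
      have hrw : ∀ x : S × S, (∏ i, pv ((Fin.snoc q x : Fin (n + 1) → S × S) i)) *
          ‖w (n + 1 + 1) (pad x₀ (n + 1) (Fin.snoc q x)) - wstar‖ ^ 2
          = (∏ i, pv (q i)) * (pv x *
              ‖(w (n + 1) (pad x₀ n q)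
                + (η₀ * α ^ (n + 1)) • tdDir φ r γ x.1 x.2 (w (n + 1) (pad x₀ n q)))
                - wstar‖ ^ 2) := by
        intro x
        rw [weight_snoc, hweq x]
        ring
      rw [Finset.sum_congr rfl (fun x _ => hrw x), ← Finset.mul_sum]
      apply mul_le_mul_of_nonneg_left _ (Finset.prod_nonneg fun i _ => hpv0 _)
      exact td_one_step P μ φ r γ ω wstar hP hProw hμ hμsum hstat hφ hγ0.le hγ1 hω0 hcov hstar
        (η₀ * α ^ (n + 1)) (hηt0 _) (hη8 _) (w (n + 1) (pad x₀ n q))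
    have hfinal : ∑ q : Fin n → S × S, (∏ i, pv (q i)) *
        ((1 - (η₀ * α ^ (n + 1)) * (ω * (1 - γ))) * ‖w (n + 1) (pad x₀ n q) - wstar‖ ^ 2
          + 2 * (η₀ * α ^ (n + 1)) ^ 2 * Vstar)
        = (1 - β * (η₀ * α ^ (n + 1))) * ee n + 2 * (η₀ * α ^ (n + 1)) ^ 2 * Vstar := by
      have expand : ∀ q : Fin n → S × S, (∏ i, pv (q i)) *
          ((1 - (η₀ * α ^ (n + 1)) * (ω * (1 - γ))) * ‖w (n + 1) (pad x₀ n q) - wstar‖ ^ 2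
            + 2 * (η₀ * α ^ (n + 1)) ^ 2 * Vstar)
          = (1 - β * (η₀ * α ^ (n + 1))) *
              ((∏ i, pv (q i)) * ‖w (n + 1) (pad x₀ n q) - wstar‖ ^ 2)
            + (2 * (η₀ * α ^ (n + 1)) ^ 2 * Vstar) * (∏ i, pv (q i)) := by
        intro q
        rw [hβ]
        ring
      rw [Finset.sum_congr rfl (fun q _ => expand q), Finset.sum_add_distrib,
        ← Finset.mul_sum, ← Finset.mul_sum, weight_total pv hpv1, mul_one, heedef]
    calc ee (n + 1) = _ := hsplit
      _ ≤ ∑ q : Fin n → S × S, (∏ i, pv (q i)) *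
          ((1 - (η₀ * α ^ (n + 1)) * (ω * (1 - γ))) * ‖w (n + 1) (pad x₀ n q) - wstar‖ ^ 2
            + 2 * (η₀ * α ^ (n + 1)) ^ 2 * Vstar) :=
        Finset.sum_le_sum (fun q _ => hinner q)
      _ = _ := hfinal
  -- the integral equals ee T
  have hcyl : ∀ q : Fin T → S × S,
      ℙ {σ | ∀ i, 1 ≤ i → i ≤ T → σ i = pad x₀ T q i} = ENNReal.ofReal (∏ i, pv (q i)) := by
    intro q
    rw [hiid T (pad x₀ T q)]
    have h1 : ∏ i ∈ Finset.Icc 1 T, ENNReal.ofReal (μ (pad x₀ T q i).1 * P (pad x₀ T q i).1 (pad x₀ T q i).2)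
        = ∏ i ∈ Finset.Icc 1 T, ENNReal.ofReal (pv (pad x₀ T q i)) := rfl
    rw [h1, ← ENNReal.ofReal_prod_of_nonneg (fun i _ => hpv0 _)]
    congr 1
    refine Finset.prod_bij'
      (fun a ha => (⟨a - 1, by have := Finset.mem_Icc.1 ha; omega⟩ : Fin T))
      (fun b _ => (b : ℕ) + 1) ?_ ?_ ?_ ?_ ?_
    · intro a ha; exact Finset.mem_univ _
    · intro b _
      simp only [Finset.mem_Icc]
      have := b.2
      omega
    · intro a ha
      have := Finset.mem_Icc.1 ha
      simp only [Fin.val_mk]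
      omega
    · intro b _
      apply Fin.ext
      simp only [Fin.val_mk]
      omega
    · intro a ha
      have h2 := Finset.mem_Icc.1 ha
      rw [pad_eq x₀ T q h2.1 h2.2]
  have hfdep : ∀ σ σ' : ℕ → S × S, (∀ i, 1 ≤ i → i ≤ T → σ i = σ' i) →
      ‖w (T + 1) σ - wstar‖ ^ 2 = ‖w (T + 1) σ' - wstar‖ ^ 2 := by
    intro σ σ' hag
    rw [hdep (T + 1) (by omega) σ σ' (fun i h1 h2 => hag i h1 (by omega))]
  have hIeq : ∫ σ, ‖w (T + 1) σ - wstar‖ ^ 2 ∂ℙ = ee T := by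
    rw [integral_cylinder x₀ pv hpv0 hpv1 T ℙ hcyl
      (fun σ => ‖w (T + 1) σ - wstar‖ ^ 2) hfdep]
  -- unroll the recursion
  have hunroll := unroll_rec ee (fun t => 1 - β * (η₀ * α ^ t))
    (fun t => 2 * (η₀ * α ^ t) ^ 2 * Vstar) hD0 hstep T
  -- geometric sums
  have hgeo : ∀ n : ℕ, ∑ j ∈ Finset.Ioc 0 n, α ^ j = (α - α ^ (n + 1)) / (1 - α) :=
    geom_Ioc hα1.ne
  -- bound on the product term
  set K : ℝ := β * η₀ * α * Tr / lgT with hK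
  have hprodbound : ∀ a b : ℕ, a ≤ b →
      (∏ t ∈ Finset.Ioc a b, (1 - β * (η₀ * α ^ t)))
        ≤ Real.exp (-(β * η₀ * ∑ t ∈ Finset.Ioc a b, α ^ t)) := by
    intro a b hab
    have h1 : (∏ t ∈ Finset.Ioc a b, (1 - β * (η₀ * α ^ t)))
        ≤ ∏ t ∈ Finset.Ioc a b, Real.exp (-(β * η₀ * α ^ t)) := by
      apply Finset.prod_le_prod (fun t _ => hD0 t)
      intro t _
      have := Real.add_one_le_exp (-(β * η₀ * α ^ t))
      have h2 : β * (η₀ * α ^ t) = β * η₀ * α ^ t := by ring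
      linarith
    rw [← Real.exp_sum, Finset.sum_neg_distrib, ← Finset.mul_sum] at h1
    exact h1
  have hbound1 : (∏ t ∈ Finset.Ioc 0 T, (1 - β * (η₀ * α ^ t)))
      ≤ Real.exp 1 * Real.exp (-K) := by
    have h1 := hprodbound 0 T (Nat.zero_le T)
    have h2 : K - 1 ≤ β * η₀ * ∑ t ∈ Finset.Ioc 0 T, α ^ t := by
      rw [hgeo T]
      have hnum : α - α ^ (T + 1) = α * (1 - 1 / Tr) := by
        rw [pow_succ, hαT]; ring
      rw [hnum]
      have hfrac : α * (1 - 1 / Tr) / xv ≤ α * (1 - 1 / Tr) / (1 - α) := by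
        apply div_le_div_of_nonneg_left _ h1mα0 h1mα_le
        have : (0:ℝ) < 1 - 1 / Tr := by
          rw [sub_pos, div_lt_one hTrpos]; linarith
        positivity
      have hfrac2 : α * (1 - 1 / Tr) / xv = α * (Tr - 1) / lgT := by
        rw [hxv, div_div_eq_mul_div]
        congr 1
        field_simp [hTrpos.ne']
      have h3 : β * η₀ * (α * (Tr - 1) / lgT) ≤ β * η₀ * (α * (1 - 1 / Tr) / (1 - α)) := by
        apply mul_le_mul_of_nonneg_left _ (by positivity)
        rw [← hfrac2]; exact hfrac
      have h4 : K - β * η₀ * (α * (Tr - 1) / lgT) = β * η₀ * α / lgT := by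
        rw [hK]
        field_simp
        ring
      have h5 : β * η₀ * α / lgT ≤ 1 := by
        rw [div_le_one hlgpos]
        linarith [hba, hlg1]
      linarith
    calc (∏ t ∈ Finset.Ioc 0 T, (1 - β * (η₀ * α ^ t)))
        ≤ Real.exp (-(β * η₀ * ∑ t ∈ Finset.Ioc 0 T, α ^ t)) := h1
      _ ≤ Real.exp (1 - K) := by
          apply Real.exp_le_exp.2
          linarith
      _ = Real.exp 1 * Real.exp (-K) := by rw [← Real.exp_add]; congr 1
  -- bound on the variance sum
  set c2 : ℝ := β * η₀ * α / (1 - α) with hc2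
  have hc2pos : 0 < c2 := div_pos (by positivity) h1mα0
  have hc2ge : β * η₀ * α * Tr / lgT ≤ c2 := by
    have h1 : β * η₀ * α / xv ≤ β * η₀ * α / (1 - α) :=
      div_le_div_of_nonneg_left (by positivity) h1mα0 h1mα_le
    have h2 : β * η₀ * α / xv = β * η₀ * α * Tr / lgT := by
      rw [hxv, div_div_eq_mul_div]
    calc β * η₀ * α * Tr / lgT = β * η₀ * α / xv := h2.symm
      _ ≤ β * η₀ * α / (1 - α) := h1
      _ = c2 := hc2.symm
  have hc2T : c2 ≤ Tr := by
    rw [hc2, div_le_iff₀ h1mα0]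
    have h1 : Tr * (xv / 2) ≤ Tr * (1 - α) :=
      mul_le_mul_of_nonneg_left h1mα_ge (by positivity)
    have h2 : Tr * (xv / 2) = lgT / 2 := by
      rw [hxv]; field_simp
    linarith [hba, hlg1, h1]
  have hKpos : 0 < β * η₀ * α * Tr / lgT := by positivity
  have hperterm : ∀ t ∈ Finset.Ioc 0 T,
      (2 * (η₀ * α ^ t) ^ 2 * Vstar) * ∏ j ∈ Finset.Ioc t T, (1 - β * (η₀ * α ^ j))
        ≤ 8 * Vstar / (Real.exp 1 * β ^ 2) * lgT ^ 2 / (α ^ 2 * Tr ^ 2) := by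
    intro t ht
    obtain ⟨ht1, ht2⟩ := Finset.mem_Ioc.1 ht
    have hgt : ∑ j ∈ Finset.Ioc t T, α ^ j = (α ^ (t + 1) - α ^ (T + 1)) / (1 - α) := by
      have hc := Finset.sum_Ioc_consecutive (fun j => α ^ j) (Nat.zero_le t) ht2
      rw [hgeo T, hgeo t] at hc
      have : ∑ j ∈ Finset.Ioc t T, α ^ j
          = (α - α ^ (T + 1)) / (1 - α) - (α - α ^ (t + 1)) / (1 - α) := by linarith
      rw [this]
      field_simp
      ring
    have hexps : β * η₀ * ∑ j ∈ Finset.Ioc t T, α ^ j = c2 * α ^ t - c2 * α ^ T := by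
      rw [hgt, hc2, pow_succ, pow_succ]
      field_simp
    have hprod := hprodbound t T ht2
    rw [hexps] at hprod
    have hsplitexp : Real.exp (-(c2 * α ^ t - c2 * α ^ T))
        = Real.exp (c2 * α ^ T) * Real.exp (-(c2 * α ^ t)) := by
      rw [← Real.exp_add]; congr 1; ring
    have hexpT : Real.exp (c2 * α ^ T) ≤ Real.exp 1 := by
      apply Real.exp_le_exp.2
      rw [hαT]
      rw [mul_one_div, div_le_one hTrpos]
      exact hc2T
    have hsq := sq_exp_le hc2pos (hαpow0 t).le
    -- assemble the per-term bound
    have hmain : (2 * (η₀ * α ^ t) ^ 2 * Vstar) * ∏ j ∈ Finset.Ioc t T, (1 - β * (η₀ * α ^ j))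
        ≤ 8 * Vstar * η₀ ^ 2 / (Real.exp 1 * c2 ^ 2) := by
      have h0 : (0:ℝ) ≤ 2 * (η₀ * α ^ t) ^ 2 * Vstar := by positivity
      have hb1 : (2 * (η₀ * α ^ t) ^ 2 * Vstar) * ∏ j ∈ Finset.Ioc t T, (1 - β * (η₀ * α ^ j))
          ≤ (2 * (η₀ * α ^ t) ^ 2 * Vstar) *
              (Real.exp (c2 * α ^ T) * Real.exp (-(c2 * α ^ t))) := by
        apply mul_le_mul_of_nonneg_left _ h0
        rw [← hsplitexp]
        exact hprod
      have hb2 : (2 * (η₀ * α ^ t) ^ 2 * Vstar) *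
            (Real.exp (c2 * α ^ T) * Real.exp (-(c2 * α ^ t)))
          ≤ (2 * (η₀ * α ^ t) ^ 2 * Vstar) * (Real.exp 1 * Real.exp (-(c2 * α ^ t))) := by
        apply mul_le_mul_of_nonneg_left _ h0
        exact mul_le_mul_of_nonneg_right hexpT (Real.exp_pos _).le
      have hb3 : (2 * (η₀ * α ^ t) ^ 2 * Vstar) * (Real.exp 1 * Real.exp (-(c2 * α ^ t)))
          = (2 * η₀ ^ 2 * Vstar * Real.exp 1) * ((α ^ t) ^ 2 * Real.exp (-(c2 * α ^ t))) := by
        ring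
      have hb4 : (2 * η₀ ^ 2 * Vstar * Real.exp 1) * ((α ^ t) ^ 2 * Real.exp (-(c2 * α ^ t)))
          ≤ (2 * η₀ ^ 2 * Vstar * Real.exp 1) * (4 / (Real.exp 1 ^ 2 * c2 ^ 2)) := by
        apply mul_le_mul_of_nonneg_left hsq (by positivity)
      have hb5 : (2 * η₀ ^ 2 * Vstar * Real.exp 1) * (4 / (Real.exp 1 ^ 2 * c2 ^ 2))
          = 8 * Vstar * η₀ ^ 2 / (Real.exp 1 * c2 ^ 2) := by
        exact hb5_aux η₀ Vstar (Real.exp 1) c2 (Real.exp_pos 1).ne' hc2pos.ne'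
      calc (2 * (η₀ * α ^ t) ^ 2 * Vstar) * ∏ j ∈ Finset.Ioc t T, (1 - β * (η₀ * α ^ j))
          ≤ (2 * (η₀ * α ^ t) ^ 2 * Vstar) *
              (Real.exp (c2 * α ^ T) * Real.exp (-(c2 * α ^ t))) := hb1
        _ ≤ (2 * (η₀ * α ^ t) ^ 2 * Vstar) * (Real.exp 1 * Real.exp (-(c2 * α ^ t))) := hb2
        _ = (2 * η₀ ^ 2 * Vstar * Real.exp 1) * ((α ^ t) ^ 2 * Real.exp (-(c2 * α ^ t))) := hb3
        _ ≤ (2 * η₀ ^ 2 * Vstar * Real.exp 1) * (4 / (Real.exp 1 ^ 2 * c2 ^ 2)) := hb4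
        _ = 8 * Vstar * η₀ ^ 2 / (Real.exp 1 * c2 ^ 2) := hb5
    have hlast : 8 * Vstar * η₀ ^ 2 / (Real.exp 1 * c2 ^ 2)
        ≤ 8 * Vstar / (Real.exp 1 * β ^ 2) * lgT ^ 2 / (α ^ 2 * Tr ^ 2) := by
      have hc2sq : (β * η₀ * α * Tr / lgT) ^ 2 ≤ c2 ^ 2 := by
        apply pow_le_pow_left₀ hKpos.le hc2ge
      have h1 : 8 * Vstar * η₀ ^ 2 / (Real.exp 1 * c2 ^ 2)
          ≤ 8 * Vstar * η₀ ^ 2 / (Real.exp 1 * (β * η₀ * α * Tr / lgT) ^ 2) := by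
        apply div_le_div_of_nonneg_left (by positivity) (by positivity)
        exact mul_le_mul_of_nonneg_left hc2sq (Real.exp_pos 1).le
      have h2 : 8 * Vstar * η₀ ^ 2 / (Real.exp 1 * (β * η₀ * α * Tr / lgT) ^ 2)
          = 8 * Vstar / (Real.exp 1 * β ^ 2) * lgT ^ 2 / (α ^ 2 * Tr ^ 2) := by
        have he1 : Real.exp 1 ≠ 0 := (Real.exp_pos 1).ne'
        field_simp
      linarith
    linarith
  have hbound2 : ∑ t ∈ Finset.Ioc 0 T,
      (2 * (η₀ * α ^ t) ^ 2 * Vstar) * ∏ j ∈ Finset.Ioc t T, (1 - β * (η₀ * α ^ j))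
      ≤ 8 * Vstar / (Real.exp 1 * β ^ 2) * lgT ^ 2 / (α ^ 2 * Tr) := by
    calc ∑ t ∈ Finset.Ioc 0 T,
        (2 * (η₀ * α ^ t) ^ 2 * Vstar) * ∏ j ∈ Finset.Ioc t T, (1 - β * (η₀ * α ^ j))
        ≤ (Finset.Ioc 0 T).card •
            (8 * Vstar / (Real.exp 1 * β ^ 2) * lgT ^ 2 / (α ^ 2 * Tr ^ 2)) :=
          Finset.sum_le_card_nsmul _ _ _ hperterm
      _ = Tr * (8 * Vstar / (Real.exp 1 * β ^ 2) * lgT ^ 2 / (α ^ 2 * Tr ^ 2)) := by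
          rw [Nat.card_Ioc, nsmul_eq_mul, hTr]
          norm_num
      _ = 8 * Vstar / (Real.exp 1 * β ^ 2) * lgT ^ 2 / (α ^ 2 * Tr) := by
          have he1 : Real.exp 1 ≠ 0 := (Real.exp_pos 1).ne'
          field_simp
  -- put everything together
  rw [hIeq]
  have hterm1 : (∏ t ∈ Finset.Ioc 0 T, (1 - β * (η₀ * α ^ t))) * ee 0
      ≤ Real.exp 1 * ‖w1 - wstar‖ ^ 2 * Real.exp (-(η₀ * ω * (1 - γ) * α * Tr / lgT)) := by
    have h1 : (∏ t ∈ Finset.Ioc 0 T, (1 - β * (η₀ * α ^ t))) * ee 0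
        ≤ (Real.exp 1 * Real.exp (-K)) * ee 0 :=
      mul_le_mul_of_nonneg_right hbound1 (heenn 0)
    have h2 : K = η₀ * ω * (1 - γ) * α * Tr / lgT := by rw [hK, hβ]; ring
    calc (∏ t ∈ Finset.Ioc 0 T, (1 - β * (η₀ * α ^ t))) * ee 0
        ≤ (Real.exp 1 * Real.exp (-K)) * ee 0 := h1
      _ = Real.exp 1 * ‖w1 - wstar‖ ^ 2 * Real.exp (-(η₀ * ω * (1 - γ) * α * Tr / lgT)) := by
          rw [hee0, ← h2]; ring
  have hfin2 : 8 * Vstar / (Real.exp 1 * β ^ 2) * lgT ^ 2 / (α ^ 2 * Tr)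
      = (8 * (∑ s, ∑ s', μ s * P s s' * ‖tdDir φ r γ s s' wstar‖ ^ 2) /
          (Real.exp 1 * (ω * (1 - γ)) ^ 2)) * lgT ^ 2 / (α ^ 2 * Tr) := by
    rw [hVeq, hβ]
  calc ee T ≤ (∏ t ∈ Finset.Ioc 0 T, (1 - β * (η₀ * α ^ t))) * ee 0
      + ∑ t ∈ Finset.Ioc 0 T,
          (2 * (η₀ * α ^ t) ^ 2 * Vstar) * ∏ j ∈ Finset.Ioc t T, (1 - β * (η₀ * α ^ j)) :=
        hunroll
    _ ≤ Real.exp 1 * ‖w1 - wstar‖ ^ 2 * Real.exp (-(η₀ * ω * (1 - γ) * α * Tr / lgT))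
        + 8 * Vstar / (Real.exp 1 * β ^ 2) * lgT ^ 2 / (α ^ 2 * Tr) :=
        add_le_add hterm1 hbound2
    _ = _ := by rw [hfin2]
end

section
/- Strong monotonicity of the regularized mean-path TD direction: for all w ∈ ℝ^d, ⟨g^r(w), w_r* − w⟩ ≥ ((1−γ)ω + λ) · ‖w − w_r*‖². -/
open scoped RealInnerProductSpace BigOperators

/-- The regularized stochastic TD(0) direction `g^r_{s,s'}(w) = g_{s,s'}(w) − λ w`. -/
noncomputable def regTdDir {S : Type*} {d : ℕ} (φ : S → EuclideanSpace ℝ (Fin d))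
    (r : S → ℝ) (γ lam : ℝ) (s s' : S) (w : EuclideanSpace ℝ (Fin d)) :
    EuclideanSpace ℝ (Fin d) :=
  tdDir φ r γ s s' w - lam • w

/-- The regularized mean-path TD(0) direction `g^r(w) = g(w) − λ w`. -/
noncomputable def regMeanDir {S : Type*} [Fintype S] {d : ℕ}
    (P : S → S → ℝ) (μ : S → ℝ) (φ : S → EuclideanSpace ℝ (Fin d))
    (r : S → ℝ) (γ lam : ℝ) (w : EuclideanSpace ℝ (Fin d)) :
    EuclideanSpace ℝ (Fin d) :=
  meanDir P μ φ r γ w - lam • w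

/-- strong monotonicity of the regularized mean-path TD direction:
for all `w`, `⟪g^r(w), w_r* − w⟫ ≥ ((1−γ)ω + λ) ‖w − w_r*‖²`. -/
theorem reg_meanDir_strong_monotone
    {S : Type*} [Fintype S] {d : ℕ}
    (P : S → S → ℝ) (μ : S → ℝ) (φ : S → EuclideanSpace ℝ (Fin d))
    (r : S → ℝ) (γ ω lam : ℝ) (wr : EuclideanSpace ℝ (Fin d))
    (hP : ∀ s s', 0 ≤ P s s') (hProw : ∀ s, ∑ s', P s s' = 1)
    (hμ : ∀ s, 0 ≤ μ s) (hμsum : ∑ s, μ s = 1)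
    (hstat : ∀ s', ∑ s, μ s * P s s' = μ s')
    (hφ : ∀ s, ‖φ s‖ ≤ 1)
    (hr : ∀ s, 0 ≤ r s ∧ r s ≤ 1)
    (hγ : 0 < γ ∧ γ ≤ 1)
    (hω : 0 < ω ∧ ω ≤ 1)
    (hcov : ∀ v : EuclideanSpace ℝ (Fin d), ω * ‖v‖ ^ 2 ≤ ∑ s, μ s * ⟪v, φ s⟫ ^ 2)
    (hlam : 0 ≤ lam)
    (hwr : regMeanDir P μ φ r γ lam wr = 0)
    (w : EuclideanSpace ℝ (Fin d)) :
    ((1 - γ) * ω + lam) * ‖w - wr‖ ^ 2 ≤ ⟪regMeanDir P μ φ r γ lam w, wr - w⟫ := by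
  obtain ⟨hγ0, hγ1⟩ := hγ
  set u : EuclideanSpace ℝ (Fin d) := w - wr with hu
  set x : S → ℝ := fun s => ⟪u, φ s⟫ with hx
  -- difference formula
  have hsub : regMeanDir P μ φ r γ lam w
      = (∑ s, ∑ s', (μ s * P s s') • ((γ * x s' - x s) • φ s)) - lam • u := by
    have h0 : regMeanDir P μ φ r γ lam w
        = regMeanDir P μ φ r γ lam w - regMeanDir P μ φ r γ lam wr := by
      rw [hwr, sub_zero]
    rw [h0]
    unfold regMeanDir meanDir
    rw [sub_sub_sub_comm, ← smul_sub]
    congr 1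
    rw [← Finset.sum_sub_distrib]
    refine Finset.sum_congr rfl fun s _ => ?_
    rw [← Finset.sum_sub_distrib]
    refine Finset.sum_congr rfl fun s' _ => ?_
    rw [← smul_sub]
    congr 1
    unfold tdDir
    rw [← sub_smul]
    congr 1
    simp only [hx, hu, inner_sub_left]
    ring
  -- compute the inner product as scalar sums
  have hkey : ⟪regMeanDir P μ φ r γ lam w, wr - w⟫
      = (∑ s, ∑ s', μ s * P s s' * (x s * x s - γ * x s * x s')) + lam * ‖u‖ ^ 2 := by
    have hwrw : wr - w = -u := by simp [hu]
    rw [hsub, hwrw, inner_sub_left, sum_inner]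
    have hterm : ∀ s : S, ⟪∑ s', (μ s * P s s') • ((γ * x s' - x s) • φ s), -u⟫
        = ∑ s', μ s * P s s' * (x s * x s - γ * x s * x s') := by
      intro s
      rw [sum_inner]
      refine Finset.sum_congr rfl fun s' _ => ?_
      rw [real_inner_smul_left, real_inner_smul_left, inner_neg_right,
        real_inner_comm]
      show μ s * P s s' * ((γ * x s' - x s) * -(x s)) = _
      ring
    rw [Finset.sum_congr rfl (fun s _ => hterm s)]
    rw [real_inner_smul_left, inner_neg_right, real_inner_self_eq_norm_sq]
    ring
  set E : ℝ := ∑ s, μ s * x s ^ 2 with hE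
  have hEnn : 0 ≤ E := Finset.sum_nonneg fun s _ => mul_nonneg (hμ s) (sq_nonneg _)
  set B : ℝ := ∑ s, ∑ s', μ s * P s s' * (x s * x s') with hB
  have hA : (∑ s, ∑ s', μ s * P s s' * (x s * x s)) = E := by
    refine Finset.sum_congr rfl fun s _ => ?_
    rw [← Finset.sum_mul]
    have : ∑ s', μ s * P s s' = μ s := by
      rw [← Finset.mul_sum, hProw s, mul_one]
    rw [this]; ring
  have hEnd : (∑ s, ∑ s', μ s * P s s' * (x s' * x s')) = E := by
    rw [Finset.sum_comm]
    refine Finset.sum_congr rfl fun s' _ => ?_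
    rw [← Finset.sum_mul, hstat s']
    ring
  -- Cauchy–Schwarz:  B ≤ E
  have hBE : B ≤ E := by
    have hcs := Finset.sum_mul_sq_le_sq_mul_sq (Finset.univ : Finset (S × S))
      (fun p => Real.sqrt (μ p.1 * P p.1 p.2) * x p.1)
      (fun p => Real.sqrt (μ p.1 * P p.1 p.2) * x p.2)
    have hm : ∀ p : S × S, 0 ≤ μ p.1 * P p.1 p.2 :=
      fun p => mul_nonneg (hμ p.1) (hP p.1 p.2)
    have e1 : (∑ p : S × S, (Real.sqrt (μ p.1 * P p.1 p.2) * x p.1) *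
        (Real.sqrt (μ p.1 * P p.1 p.2) * x p.2)) = B := by
      rw [hB, Fintype.sum_prod_type]
      refine Finset.sum_congr rfl fun a _ => Finset.sum_congr rfl fun b _ => ?_
      set p : S × S := (a, b)
      have : Real.sqrt (μ p.1 * P p.1 p.2) * Real.sqrt (μ p.1 * P p.1 p.2)
          = μ p.1 * P p.1 p.2 := Real.mul_self_sqrt (hm p)
      calc Real.sqrt (μ p.1 * P p.1 p.2) * x p.1 *
            (Real.sqrt (μ p.1 * P p.1 p.2) * x p.2)
          = Real.sqrt (μ p.1 * P p.1 p.2) * Real.sqrt (μ p.1 * P p.1 p.2) *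
            (x p.1 * x p.2) := by ring
        _ = μ p.1 * P p.1 p.2 * (x p.1 * x p.2) := by rw [this]
    have e2 : (∑ p : S × S, (Real.sqrt (μ p.1 * P p.1 p.2) * x p.1) ^ 2) = E := by
      rw [← hA, Fintype.sum_prod_type]
      refine Finset.sum_congr rfl fun a _ => Finset.sum_congr rfl fun b _ => ?_
      set p : S × S := (a, b)
      rw [mul_pow, Real.sq_sqrt (hm p)]
      ring
    have e3 : (∑ p : S × S, (Real.sqrt (μ p.1 * P p.1 p.2) * x p.2) ^ 2) = E := by
      rw [← hEnd, Fintype.sum_prod_type]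
      refine Finset.sum_congr rfl fun a _ => Finset.sum_congr rfl fun b _ => ?_
      set p : S × S := (a, b)
      rw [mul_pow, Real.sq_sqrt (hm p)]
      ring
    rw [e1, e2, e3] at hcs
    nlinarith [hcs, hEnn]
  -- put everything together
  have hsplit : (∑ s, ∑ s', μ s * P s s' * (x s * x s - γ * x s * x s'))
      = E - γ * B := by
    rw [← hA, hB, Finset.mul_sum, ← Finset.sum_sub_distrib]
    refine Finset.sum_congr rfl fun s _ => ?_
    rw [Finset.mul_sum, ← Finset.sum_sub_distrib]
    refine Finset.sum_congr rfl fun s' _ => ?_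
    ring
  have hcovu := hcov u
  have hxeq : (∑ s, μ s * ⟪u, φ s⟫ ^ 2) = E := by
    rw [hE]
  rw [hxeq] at hcovu
  have hnorm : ‖w - wr‖ = ‖u‖ := by rw [hu]
  rw [hkey, hsplit, hnorm]
  nlinarith [mul_le_mul_of_nonneg_left hBE (le_of_lt hγ0), hcovu,
    sq_nonneg ‖u‖, hEnn]
end

section
/- Mixing controls the bias of the expected TD direction: assume geometric mixing with constants m > 0 and ρ ∈ (0,1), and for δ ∈ (0,1) let τ_δ = min{t ∈ ℕ : mρ^t ≤ δ}. Then for any initial probability distribution μ₀ on S, any w ∈ ℝ^d, and any t ≥ τ_δ, ‖ ∑_{s,s'} (P^t μ₀)(s) P(s,s') g^r_{s,s'}(w) − g^r(w) ‖ ≤ 2(2+λ) δ (‖w‖ + 1). -/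
open scoped RealInnerProductSpace BigOperators

/-- One step of the distribution dynamics: `(ν P)(s') = ∑_s ν(s) P(s,s')`. -/
noncomputable def pushDist {S : Type*} [Fintype S] (P : S → S → ℝ) (ν : S → ℝ) : S → ℝ :=
  fun s' => ∑ s, ν s * P s s'

lemma regTdDir_norm_le {S : Type*} {d : ℕ} (φ : S → EuclideanSpace ℝ (Fin d))
    (r : S → ℝ) (γ lam : ℝ) (s s' : S) (w : EuclideanSpace ℝ (Fin d))
    (hφ : ∀ s, ‖φ s‖ ≤ 1) (hr : ∀ s, 0 ≤ r s ∧ r s ≤ 1)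
    (hγ : 0 < γ ∧ γ ≤ 1) (hlam : 0 ≤ lam) :
    ‖regTdDir φ r γ lam s s' w‖ ≤ (2 + lam) * (‖w‖ + 1) := by
  have hw : (0:ℝ) ≤ ‖w‖ := norm_nonneg _
  have h1 : ‖tdDir φ r γ s s' w‖ ≤ 1 + 2 * ‖w‖ := by
    rw [tdDir, norm_smul]
    have hc : |r s + γ * ⟪w, φ s'⟫ - ⟪w, φ s⟫| ≤ 1 + 2 * ‖w‖ := by
      have h2 : |⟪w, φ s'⟫| ≤ ‖w‖ := by
        calc |⟪w, φ s'⟫| ≤ ‖w‖ * ‖φ s'‖ := abs_real_inner_le_norm _ _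
        _ ≤ ‖w‖ * 1 := by nlinarith [hφ s']
        _ = ‖w‖ := mul_one _
      have h3 : |⟪w, φ s⟫| ≤ ‖w‖ := by
        calc |⟪w, φ s⟫| ≤ ‖w‖ * ‖φ s‖ := abs_real_inner_le_norm _ _
        _ ≤ ‖w‖ * 1 := by nlinarith [hφ s]
        _ = ‖w‖ := mul_one _
      have h4 : |γ * ⟪w, φ s'⟫| ≤ ‖w‖ := by
        rw [abs_mul]
        calc |γ| * |⟪w, φ s'⟫| ≤ 1 * ‖w‖ := by
              apply mul_le_mul _ h2 (abs_nonneg _) zero_le_one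
              rw [abs_of_pos hγ.1]; exact hγ.2
        _ = ‖w‖ := one_mul _
      have hrs := hr s
      have := abs_sub (r s + γ * ⟪w, φ s'⟫) (⟪w, φ s⟫)
      have h5 : |r s + γ * ⟪w, φ s'⟫| ≤ 1 + ‖w‖ := by
        calc |r s + γ * ⟪w, φ s'⟫| ≤ |r s| + |γ * ⟪w, φ s'⟫| := abs_add_le _ _
        _ ≤ 1 + ‖w‖ := by
            have : |r s| ≤ 1 := abs_le.mpr ⟨by linarith [hrs.1], hrs.2⟩
            linarith
      calc |r s + γ * ⟪w, φ s'⟫ - ⟪w, φ s⟫| ≤ |r s + γ * ⟪w, φ s'⟫| + |⟪w, φ s⟫| :=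
            abs_sub _ _
      _ ≤ 1 + 2 * ‖w‖ := by linarith
    calc |r s + γ * ⟪w, φ s'⟫ - ⟪w, φ s⟫| * ‖φ s‖ ≤ (1 + 2 * ‖w‖) * 1 := by
          apply mul_le_mul hc (hφ s) (norm_nonneg _) (by linarith)
    _ = 1 + 2 * ‖w‖ := mul_one _
  calc ‖regTdDir φ r γ lam s s' w‖ ≤ ‖tdDir φ r γ s s' w‖ + ‖lam • w‖ := norm_sub_le _ _
  _ ≤ (1 + 2 * ‖w‖) + lam * ‖w‖ := by
      rw [norm_smul, Real.norm_eq_abs, abs_of_nonneg hlam]; linarith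
  _ ≤ (2 + lam) * (‖w‖ + 1) := by nlinarith

/-- mixing controls the bias of the expected TD direction.  Under
geometric mixing with constants `m > 0`, `ρ ∈ (0,1)`, if `τ_δ = min{t : mρ^t ≤ δ}`
then for any initial distribution `μ₀`, any `w`, and any `t ≥ τ_δ`,
`‖∑_{s,s'} (P^t μ₀)(s) P(s,s') g^r_{s,s'}(w) − g^r(w)‖ ≤ 2(2+λ)δ(‖w‖+1)`. -/
theorem mixing_bias_bound
    {S : Type*} [Fintype S] {d : ℕ}
    (P : S → S → ℝ) (μ : S → ℝ) (φ : S → EuclideanSpace ℝ (Fin d))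
    (r : S → ℝ) (γ lam : ℝ)
    (hP : ∀ s s', 0 ≤ P s s') (hProw : ∀ s, ∑ s', P s s' = 1)
    (hμ : ∀ s, 0 ≤ μ s) (hμsum : ∑ s, μ s = 1)
    (hstat : ∀ s', ∑ s, μ s * P s s' = μ s')
    (hφ : ∀ s, ‖φ s‖ ≤ 1)
    (hr : ∀ s, 0 ≤ r s ∧ r s ≤ 1)
    (hγ : 0 < γ ∧ γ ≤ 1)
    (hlam : 0 ≤ lam)
    -- geometric mixing
    (m ρ : ℝ) (hm : 0 < m) (hρ : 0 < ρ ∧ ρ < 1)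
    (hmix : ∀ ν : S → ℝ, (∀ s, 0 ≤ ν s) → ∑ s, ν s = 1 →
      ∀ t : ℕ, (1 / 2) * ∑ s, |(pushDist P)^[t] ν s - μ s| ≤ m * ρ ^ t)
    -- the mixing time `τ_δ = min{t ∈ ℕ : m ρ^t ≤ δ}`
    (δ : ℝ) (hδ : 0 < δ ∧ δ < 1)
    (τ : ℕ) (hτ : m * ρ ^ τ ≤ δ) (hτmin : ∀ t : ℕ, t < τ → δ < m * ρ ^ t)
    -- initial distribution
    (μ₀ : S → ℝ) (hμ₀ : ∀ s, 0 ≤ μ₀ s) (hμ₀sum : ∑ s, μ₀ s = 1)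
    (w : EuclideanSpace ℝ (Fin d)) (t : ℕ) (ht : τ ≤ t) :
    ‖(∑ s, ∑ s', ((pushDist P)^[t] μ₀ s * P s s') • regTdDir φ r γ lam s s' w) -
        regMeanDir P μ φ r γ lam w‖ ≤ 2 * (2 + lam) * δ * (‖w‖ + 1) := by
  set ν : S → ℝ := (pushDist P)^[t] μ₀ with hνdef
  set C : ℝ := (2 + lam) * (‖w‖ + 1) with hC
  have hw : (0:ℝ) ≤ ‖w‖ := norm_nonneg _
  have hCpos : 0 ≤ C := by positivity
  -- μ-sum form of regMeanDir
  have hμPsum : ∑ s, ∑ s', μ s * P s s' = 1 := by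
    calc ∑ s, ∑ s', μ s * P s s' = ∑ s, μ s * ∑ s', P s s' := by
          simp [Finset.mul_sum]
    _ = 1 := by simp [hProw, hμsum]
  have hreg : regMeanDir P μ φ r γ lam w
      = ∑ s, ∑ s', (μ s * P s s') • regTdDir φ r γ lam s s' w := by
    simp only [regMeanDir, meanDir, regTdDir, smul_sub, Finset.sum_sub_distrib,
      ← Finset.sum_smul, hμPsum, one_smul]
  -- the difference
  have hdiff : (∑ s, ∑ s', (ν s * P s s') • regTdDir φ r γ lam s s' w) -
      regMeanDir P μ φ r γ lam w
      = ∑ s, ∑ s', ((ν s - μ s) * P s s') • regTdDir φ r γ lam s s' w := by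
    rw [hreg, ← Finset.sum_sub_distrib]
    refine Finset.sum_congr rfl fun s _ => ?_
    rw [← Finset.sum_sub_distrib]
    refine Finset.sum_congr rfl fun s' _ => ?_
    rw [← sub_smul, sub_mul]
  rw [hdiff]
  have hbound : ∀ s s', ‖regTdDir φ r γ lam s s' w‖ ≤ C :=
    fun s s' => regTdDir_norm_le φ r γ lam s s' w hφ hr hγ hlam
  have hstep : ‖∑ s, ∑ s', ((ν s - μ s) * P s s') • regTdDir φ r γ lam s s' w‖
      ≤ ∑ s, |ν s - μ s| * C := by
    refine (norm_sum_le _ _).trans (Finset.sum_le_sum fun s _ => ?_)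
    refine (norm_sum_le _ _).trans ?_
    have : ∀ s' : S, ‖((ν s - μ s) * P s s') • regTdDir φ r γ lam s s' w‖
        ≤ |ν s - μ s| * P s s' * C := by
      intro s'
      rw [norm_smul, Real.norm_eq_abs, abs_mul, abs_of_nonneg (hP s s')]
      exact mul_le_mul_of_nonneg_left (hbound s s')
        (mul_nonneg (abs_nonneg _) (hP s s'))
    refine (Finset.sum_le_sum fun s' _ => this s').trans ?_
    have : ∑ s', |ν s - μ s| * P s s' * C = |ν s - μ s| * C := by
      rw [← Finset.sum_mul, ← Finset.mul_sum, hProw, mul_one]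
    rw [this]
  refine hstep.trans ?_
  -- mixing bound
  have hmix' := hmix μ₀ hμ₀ hμ₀sum t
  have hpow : ρ ^ t ≤ ρ ^ τ := pow_le_pow_of_le_one hρ.1.le hρ.2.le ht
  have h2δ : ∑ s, |ν s - μ s| ≤ 2 * δ := by
    have : m * ρ ^ t ≤ δ := le_trans (by nlinarith) hτ
    nlinarith [hmix']
  calc ∑ s, |ν s - μ s| * C = (∑ s, |ν s - μ s|) * C := (Finset.sum_mul _ _ _).symm
  _ ≤ 2 * δ * C := mul_le_mul_of_nonneg_right h2δ hCpos
  _ = 2 * (2 + lam) * δ * (‖w‖ + 1) := by ring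
end

section
/- Geometric-sum bound up to the mixing time: let T ≥ 3 be an integer, 0 < η₀ ≤ 1, α = (1/T)^{1/T}, T' = T/η₀, and let a, b > 0 be constants with τ = a ln(T') + b. Then for every natural number t with t ≤ τ, (1 − α^t)/(1 − α) ≤ 4 max{a, b} · ln(T'). -/
/-- geometric-sum bound up to the mixing time.  For an integer `T ≥ 3`,
`0 < η₀ ≤ 1`, `α = (1/T)^{1/T}`, `T' = T/η₀`, constants `a, b > 0` and
`τ = a ln(T') + b`, every natural number `t ≤ τ` satisfies
`(1 − α^t)/(1 − α) ≤ 4 max{a,b} ln(T')`. -/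
theorem geometric_sum_bound_up_to_mixing_time
    (T : ℕ) (hT : 3 ≤ T)
    (η₀ : ℝ) (hη₀ : 0 < η₀ ∧ η₀ ≤ 1)
    (α T' a b τ : ℝ)
    (hα : α = (1 / (T : ℝ)) ^ ((1 : ℝ) / (T : ℝ)))
    (hT' : T' = (T : ℝ) / η₀)
    (ha : 0 < a) (hb : 0 < b)
    (hτ : τ = a * Real.log T' + b)
    (t : ℕ) (ht : (t : ℝ) ≤ τ) :
    (1 - α ^ t) / (1 - α) ≤ 4 * max a b * Real.log T' := by
  obtain ⟨hη₀0, hη₀1⟩ := hη₀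
  have hT3 : (3 : ℝ) ≤ (T : ℝ) := by exact_mod_cast hT
  have hTpos : (0 : ℝ) < T := by linarith
  have hTT' : (T : ℝ) ≤ T' := by
    rw [hT', le_div_iff₀ hη₀0]
    nlinarith
  have hT'pos : 0 < T' := by linarith
  -- log T' ≥ 1
  have hlog : 1 ≤ Real.log T' := by
    rw [Real.le_log_iff_exp_le hT'pos]
    have := Real.exp_one_lt_d9
    linarith
  -- α ∈ [0, 1)
  have hα0 : 0 ≤ α := by
    rw [hα]
    exact Real.rpow_nonneg (by positivity) _
  have hα1 : α < 1 := by
    rw [hα]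
    exact Real.rpow_lt_one (by positivity) (by rw [div_lt_one hTpos]; linarith)
      (by positivity)
  have h1α : 0 < 1 - α := by linarith
  -- geometric sum ≤ t via Bernoulli
  have hbern : 1 + (t : ℝ) * (α - 1) ≤ α ^ t := by
    have := one_add_mul_le_pow (a := α - 1) (by linarith) t
    simpa using this
  have hgeom : (1 - α ^ t) / (1 - α) ≤ (t : ℝ) := by
    rw [div_le_iff₀ h1α]
    nlinarith
  have hmax : max a b ≤ max a b := le_refl _
  have hA : a ≤ max a b := le_max_left _ _
  have hB : b ≤ max a b := le_max_right _ _
  have hmpos : 0 < max a b := lt_of_lt_of_le ha hA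
  have hτle : τ ≤ 2 * max a b * Real.log T' := by
    rw [hτ]
    have h1 : a * Real.log T' ≤ max a b * Real.log T' :=
      mul_le_mul_of_nonneg_right hA (by linarith)
    have h2 : b ≤ max a b * Real.log T' := by
      calc b ≤ max a b := hB
        _ = max a b * 1 := by ring
        _ ≤ max a b * Real.log T' := by
            exact mul_le_mul_of_nonneg_left hlog (le_of_lt hmpos)
    linarith
  calc (1 - α ^ t) / (1 - α) ≤ (t : ℝ) := hgeom
    _ ≤ τ := ht
    _ ≤ 2 * max a b * Real.log T' := hτle
    _ ≤ 4 * max a b * Real.log T' := by nlinarith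
end

section
/- Reverse geometric-sum bound at the mixing time: let T ≥ 3 be an integer with T ≥ 1/η₀, 0 < η₀ ≤ 1, α = (1/T)^{1/T}, T' = T/η₀, and let a, b > 0 be constants with τ = a ln(T') + b. Assume additionally that (ln T)²/T ≤ 1/(2a) and (ln T)/T ≤ 1/b. Then (α^{−τ} − 1)/(1 − α) ≤ 8 max{a, b} · ln(T'). -/

private lemma aux_exp_neg_le (x : ℝ) (hx : 0 ≤ x) :
    Real.exp (-x) ≤ 1 - x + x ^ 2 / 2 := by
  have hquad : 1 + x + x ^ 2 / 2 ≤ Real.exp x := Real.quadratic_le_exp_of_nonneg hx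
  have hpos : (0:ℝ) < 1 + x + x ^ 2 / 2 := by positivity
  have h1 : Real.exp (-x) ≤ (1 + x + x ^ 2 / 2)⁻¹ := by
    rw [Real.exp_neg]
    exact inv_anti₀ hpos hquad
  have h2 : (1 + x + x ^ 2 / 2)⁻¹ ≤ 1 - x + x ^ 2 / 2 := by
    rw [inv_eq_one_div, div_le_iff₀ hpos]
    nlinarith [sq_nonneg (x ^ 2)]
  exact le_trans h1 h2

private lemma aux_chord (y : ℝ) (h0 : 0 ≤ y) (h2 : y ≤ 2) :
    Real.exp y ≤ 1 + y / 2 * (Real.exp 2 - 1) := by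
  have hcv := convexOn_exp.2 (Set.mem_univ (0:ℝ)) (Set.mem_univ (2:ℝ))
    (by linarith : (0:ℝ) ≤ 1 - y / 2) (by linarith : (0:ℝ) ≤ y / 2) (by ring)
  simp only [smul_eq_mul, mul_zero, zero_add, Real.exp_zero, mul_one] at hcv
  have heq : y / 2 * 2 = y := by ring
  rw [heq] at hcv
  linarith

private lemma aux_numeric :
    Real.exp 2 - 1 ≤ 8 * (1 - 1 / (2 * Real.exp 1)) := by
  have h1 := Real.exp_one_gt_d9
  have h2 := Real.exp_one_lt_d9
  have he2 : Real.exp 2 = Real.exp 1 * Real.exp 1 := by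
    rw [← Real.exp_add]; norm_num
  have hpos : (0:ℝ) < Real.exp 1 := Real.exp_pos 1
  rw [he2]
  have key : 4 / Real.exp 1 ≤ 9 - Real.exp 1 * Real.exp 1 := by
    rw [div_le_iff₀ hpos]
    nlinarith
  have heq : 8 * (1 - 1 / (2 * Real.exp 1)) = 8 - 4 / Real.exp 1 := by
    field_simp
    ring
  linarith

/-- reverse geometric-sum bound at the mixing time.  For an integer
`T ≥ 3` with `T ≥ 1/η₀`, `0 < η₀ ≤ 1`, `α = (1/T)^{1/T}`, `T' = T/η₀`, constants
`a, b > 0`, `τ = a ln(T') + b`, and assuming `(ln T)²/T ≤ 1/(2a)` and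
`(ln T)/T ≤ 1/b`, one has `(α^{−τ} − 1)/(1 − α) ≤ 8 max{a,b} ln(T')`. -/
theorem reverse_geometric_sum_bound_at_mixing_time
    (T : ℕ) (hT : 3 ≤ T)
    (η₀ : ℝ) (hη₀ : 0 < η₀ ∧ η₀ ≤ 1)
    (hTη : 1 / η₀ ≤ (T : ℝ))
    (α T' a b τ : ℝ)
    (hα : α = (1 / (T : ℝ)) ^ ((1 : ℝ) / (T : ℝ)))
    (hT' : T' = (T : ℝ) / η₀)
    (ha : 0 < a) (hb : 0 < b)
    (hτ : τ = a * Real.log T' + b)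
    (hTa : (Real.log T) ^ 2 / (T : ℝ) ≤ 1 / (2 * a))
    (hTb : Real.log T / (T : ℝ) ≤ 1 / b) :
    (α ^ (-τ) - 1) / (1 - α) ≤ 8 * max a b * Real.log T' := by
  obtain ⟨hη₀pos, hη₀le⟩ := hη₀
  have hT3 : (3:ℝ) ≤ (T:ℝ) := by exact_mod_cast hT
  have hTpos : (0:ℝ) < T := by linarith
  set x : ℝ := Real.log T / T with hxdef
  clear_value x
  have he3 : Real.exp 1 ≤ 3 := by
    have := Real.exp_one_lt_d9
    linarith
  have he1 : 1 < Real.exp 1 := by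
    have := Real.exp_one_gt_d9
    linarith
  have hepos : (0:ℝ) < Real.exp 1 := Real.exp_pos 1
  have hlogT : 1 ≤ Real.log T := by
    calc (1:ℝ) = Real.log (Real.exp 1) := (Real.log_exp 1).symm
    _ ≤ Real.log T := Real.log_le_log (Real.exp_pos 1) (by linarith)
  have hxpos : 0 < x := by rw [hxdef]; positivity
  -- x ≤ 1/e
  have hlogsub : Real.log ((T:ℝ) / Real.exp 1) ≤ (T:ℝ) / Real.exp 1 - 1 :=
    Real.log_le_sub_one_of_pos (by positivity)
  have hlogdiv : Real.log ((T:ℝ) / Real.exp 1) = Real.log T - 1 := by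
    rw [Real.log_div (by positivity) (by positivity), Real.log_exp]
  have hlogTe : Real.log T ≤ (T:ℝ) / Real.exp 1 := by
    rw [hlogdiv] at hlogsub; linarith
  have hxe : x ≤ 1 / Real.exp 1 := by
    rw [hxdef, div_le_div_iff₀ hTpos hepos]
    rw [le_div_iff₀ hepos] at hlogTe
    linarith [hlogTe]
  -- α = exp (-x)
  have hαx : α = Real.exp (-x) := by
    rw [hα, hxdef, Real.rpow_def_of_pos (by positivity), Real.log_div one_ne_zero (by positivity),
      Real.log_one]
    ring_nf
  have hαpos : 0 < α := by rw [hαx]; exact Real.exp_pos _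
  -- α^(-τ) = exp (τ * x)
  have hατ : α ^ (-τ) = Real.exp (τ * x) := by
    rw [Real.rpow_def_of_pos hαpos, hαx, Real.log_exp]
    ring_nf
  -- bounds on L = log T'
  set L := Real.log T' with hLdef
  clear_value L
  have hT'T : (T:ℝ) ≤ T' := by
    rw [hT']
    rw [le_div_iff₀ hη₀pos]
    nlinarith
  have hL1 : 1 ≤ L := by rw [hLdef]; exact le_trans hlogT (Real.log_le_log hTpos hT'T)
  have hL2 : L ≤ 2 * Real.log T := by
    have h1 : Real.log T' = Real.log T + Real.log (1/η₀) := by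
      rw [hT', Real.log_div (by positivity) (ne_of_gt hη₀pos),
        Real.log_div one_ne_zero (ne_of_gt hη₀pos), Real.log_one]
      ring
    have h2 : Real.log (1/η₀) ≤ Real.log T := Real.log_le_log (by positivity) hTη
    rw [hLdef, h1]; linarith
  -- τ x ≤ 2
  have hax : 2 * a * (Real.log T ^ 2 / T) ≤ 1 := by
    rw [div_le_div_iff₀ (by positivity) (by positivity)] at hTa
    have heq : 2 * a * (Real.log T ^ 2 / (T:ℝ)) = (Real.log T ^ 2 * (2 * a)) / T := by ring
    rw [heq, div_le_one hTpos]
    linarith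
  have hbx : b * x ≤ 1 := by
    rw [le_div_iff₀ hb] at hTb
    linarith
  have hτx2 : τ * x ≤ 2 := by
    have haLx : a * L * x ≤ 1 := by
      have h1 : a * L * x ≤ a * (2 * Real.log T) * x :=
        mul_le_mul_of_nonneg_right (mul_le_mul_of_nonneg_left hL2 ha.le) hxpos.le
      have heq : a * (2 * Real.log T) * x = 2 * a * (Real.log T ^ 2 / (T:ℝ)) := by
        rw [hxdef]; ring
      linarith [hax]
    have hexp : (a * L + b) * x = a * L * x + b * x := by ring
    rw [hτ]; linarith
  have hτpos : 0 < τ := by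
    rw [hτ]
    have h1 : 0 < a * L := mul_pos ha (by linarith)
    linarith
  have hτxnn : 0 ≤ τ * x := by positivity
  have hchord := aux_chord (τ * x) hτxnn hτx2
  -- 1 - α ≥ x (1 - 1/(2e))
  have hαle : α ≤ 1 - x + x ^ 2 / 2 := hαx ▸ aux_exp_neg_le x hxpos.le
  have hden : x * (1 - 1 / (2 * Real.exp 1)) ≤ 1 - α := by
    have h1 : x * x ≤ x * (1 / Real.exp 1) := mul_le_mul_of_nonneg_left hxe hxpos.le
    have heq1 : x ^ 2 / 2 = x * x / 2 := by ring
    have heq2 : x * (1 / Real.exp 1) / 2 = x * (1 / (2 * Real.exp 1)) := by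
      field_simp
    have heq3 : x * (1 - 1 / (2 * Real.exp 1)) = x - x * (1 / (2 * Real.exp 1)) := by ring
    linarith
  have hdenpos : 0 < 1 - α := by
    have h1 : 1 / (2 * Real.exp 1) < 1 := by
      rw [div_lt_one (by positivity)]; linarith
    have h2 : 0 < x * (1 - 1 / (2 * Real.exp 1)) := mul_pos hxpos (by linarith)
    linarith
  -- main
  rw [div_le_iff₀ hdenpos, hατ]
  set M := max a b with hM
  clear_value M
  have hMa : a ≤ M := hM ▸ le_max_left a b
  have hMb : b ≤ M := hM ▸ le_max_right a b
  have hMpos : 0 < M := lt_of_lt_of_le ha hMa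
  have hτM : τ ≤ 2 * (M * L) := by
    have h1 : a * L ≤ M * L := mul_le_mul_of_nonneg_right hMa (by linarith)
    have h2 : M ≤ M * L := le_mul_of_one_le_right hMpos.le hL1
    rw [hτ]; linarith
  have hτxM : τ * x ≤ 2 * (M * L * x) := by
    have h1 : τ * x ≤ (2 * (M * L)) * x := mul_le_mul_of_nonneg_right hτM hxpos.le
    have heq : (2 * (M * L)) * x = 2 * (M * L * x) := by ring
    linarith
  have hE1 : (1:ℝ) ≤ Real.exp 2 := by
    have := Real.add_one_le_exp (2:ℝ)
    linarith
  have hMLx : 0 ≤ M * L * x := by positivity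
  have hstep2 : τ * x / 2 * (Real.exp 2 - 1) ≤ (M * L * x) * (Real.exp 2 - 1) :=
    mul_le_mul_of_nonneg_right (by linarith) (by linarith)
  have hstep3 : (M * L * x) * (Real.exp 2 - 1) ≤ (M * L * x) * (8 * (1 - 1 / (2 * Real.exp 1))) :=
    mul_le_mul_of_nonneg_left aux_numeric hMLx
  have hstep4 : 8 * M * L * (x * (1 - 1 / (2 * Real.exp 1))) ≤ 8 * M * L * (1 - α) :=
    mul_le_mul_of_nonneg_left hden (by positivity)
  have heqf : (M * L * x) * (8 * (1 - 1 / (2 * Real.exp 1)))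
      = 8 * M * L * (x * (1 - 1 / (2 * Real.exp 1))) := by ring
  linarith
end

section
/- Bias-variance sum bound for exponentially decaying step-sizes: for an integer T ≥ 2, α = (1/T)^{1/T}, and any real a > 0, ∑_{t=1}^{T} α^{2t} · exp( −a ∑_{i=t+1}^{T} α^i ) ≤ 4c (ln T)² / (a² e² α² T), where c = exp(a/ln T). -/
open scoped BigOperators

lemma exp_neg_le_four_div (x : ℝ) (hx : 0 < x) :
    Real.exp (-x) ≤ 4 / (Real.exp 1 ^ 2 * x ^ 2) := by
  have h0 : x / 2 ≤ Real.exp (x / 2 - 1) := by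
    have h := Real.add_one_le_exp (x / 2 - 1)
    linarith
  have h1 : Real.exp 1 * (x / 2) ≤ Real.exp (x / 2) := by
    calc Real.exp 1 * (x / 2) ≤ Real.exp 1 * Real.exp (x / 2 - 1) :=
          mul_le_mul_of_nonneg_left h0 (Real.exp_pos 1).le
      _ = Real.exp (x / 2) := by rw [← Real.exp_add]; ring_nf
  rw [le_div_iff₀ (by positivity)]
  have h2 : (Real.exp 1 * (x / 2)) ^ 2 ≤ Real.exp (x / 2) ^ 2 :=
    pow_le_pow_left₀ (by positivity) h1 2
  have h3 : Real.exp (x / 2) ^ 2 = Real.exp x := by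
    rw [sq, ← Real.exp_add]; ring_nf
  have h4 : Real.exp (-x) * Real.exp x = 1 := by rw [← Real.exp_add]; simp
  nlinarith [Real.exp_pos (-x), Real.exp_pos x]

/-- bias-variance sum bound for exponentially decaying step-sizes:
for an integer `T ≥ 2`, `α = (1/T)^{1/T}`, and any `a > 0`,
`∑_{t=1}^{T} α^{2t} exp(−a ∑_{i=t+1}^{T} α^i) ≤ 4c (ln T)²/(a² e² α² T)`,
where `c = exp(a/ln T)`. -/
theorem sum_exp_decay_bias_variance_bound
    (T : ℕ) (hT : 2 ≤ T)
    (α : ℝ) (hα : α = (1 / (T : ℝ)) ^ ((1 : ℝ) / (T : ℝ)))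
    (a : ℝ) (ha : 0 < a)
    (c : ℝ) (hc : c = Real.exp (a / Real.log T)) :
    ∑ t ∈ Finset.Icc 1 T, α ^ (2 * t) * Real.exp (-(a * ∑ i ∈ Finset.Icc (t + 1) T, α ^ i)) ≤
      4 * c * (Real.log T) ^ 2 / (a ^ 2 * Real.exp 1 ^ 2 * α ^ 2 * T) := by
  have hT' : (2 : ℝ) ≤ T := by exact_mod_cast hT
  have hTpos : (0 : ℝ) < T := by linarith
  have hlog : 0 < Real.log T := Real.log_pos (by linarith)
  have hαpos : 0 < α := by rw [hα]; positivity
  have hα1 : α < 1 := by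
    rw [hα]
    exact Real.rpow_lt_one (by positivity) (by rw [div_lt_one hTpos]; linarith) (by positivity)
  have hαT : α ^ T = 1 / (T : ℝ) := by
    rw [hα, ← Real.rpow_natCast ((1 / (T : ℝ)) ^ ((1 : ℝ) / T)) T, ← Real.rpow_mul (by positivity),
      one_div, inv_mul_cancel₀ (ne_of_gt hTpos), Real.rpow_one]
  have hαexp : α = Real.exp (-(Real.log T / T)) := by
    rw [hα, Real.rpow_def_of_pos (by positivity), one_div, Real.log_inv]
    congr 1
    ring
  have h1α : 1 - α ≤ Real.log T / T := by
    have h := Real.add_one_le_exp (-(Real.log T / T))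
    rw [← hαexp] at h
    linarith
  have hcpos : 1 ≤ c := by
    rw [hc]
    exact Real.one_le_exp (by positivity)
  -- per-term bound
  have key : ∀ t ∈ Finset.Icc 1 T,
      α ^ (2 * t) * Real.exp (-(a * ∑ i ∈ Finset.Icc (t + 1) T, α ^ i)) ≤
      4 * c * Real.log T ^ 2 / (a ^ 2 * Real.exp 1 ^ 2 * α ^ 2 * T ^ 2) := by
    intro t ht
    obtain ⟨ht1, htT⟩ := Finset.mem_Icc.mp ht
    have hne : α - 1 ≠ 0 := sub_ne_zero_of_ne (ne_of_lt hα1)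
    have h1αpos : 0 < 1 - α := by linarith
    have hsum : ∑ i ∈ Finset.Icc (t + 1) T, α ^ i =
        (α ^ (t + 1) - α ^ (T + 1)) / (1 - α) := by
      rw [← Finset.Ico_add_one_right_eq_Icc, geom_sum_Ico (ne_of_lt hα1) (by omega)]
      field_simp
      ring
    have hA : 0 ≤ α ^ (t + 1) - α ^ (T + 1) := by
      have := pow_le_pow_of_le_one hαpos.le hα1.le (by omega : t + 1 ≤ T + 1)
      linarith
    have hS : (α ^ (t + 1) - α ^ (T + 1)) * ((T : ℝ) / Real.log T) ≤
        ∑ i ∈ Finset.Icc (t + 1) T, α ^ i := by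
      rw [hsum]
      have heq : (α ^ (t + 1) - α ^ (T + 1)) * ((T : ℝ) / Real.log T) =
          (α ^ (t + 1) - α ^ (T + 1)) / (Real.log T / T) := by
        field_simp
      rw [heq]
      gcongr
    have hTα : (T : ℝ) * α ^ (T + 1) = α := by
      rw [pow_succ, hαT]
      field_simp
    set x : ℝ := a * T * α ^ (t + 1) / Real.log T with hx
    have hxpos : 0 < x := by positivity
    have hexp : Real.exp (-(a * ∑ i ∈ Finset.Icc (t + 1) T, α ^ i)) ≤ c * Real.exp (-x) := by
      have h1 : -(a * ∑ i ∈ Finset.Icc (t + 1) T, α ^ i) ≤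
          -(a * ((α ^ (t + 1) - α ^ (T + 1)) * ((T : ℝ) / Real.log T))) := by
        have := mul_le_mul_of_nonneg_left hS ha.le
        linarith
      have h2 : -(a * ((α ^ (t + 1) - α ^ (T + 1)) * ((T : ℝ) / Real.log T))) =
          a * α / Real.log T + -x := by
        rw [hx]
        field_simp
        linear_combination hTα
      calc Real.exp (-(a * ∑ i ∈ Finset.Icc (t + 1) T, α ^ i))
          ≤ Real.exp (a * α / Real.log T + -x) := by
            rw [← h2]; exact Real.exp_le_exp.mpr h1
        _ = Real.exp (a * α / Real.log T) * Real.exp (-x) := Real.exp_add _ _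
        _ ≤ c * Real.exp (-x) := by
            apply mul_le_mul_of_nonneg_right _ (Real.exp_pos _).le
            rw [hc]
            apply Real.exp_le_exp.mpr
            rw [div_le_div_iff₀ hlog hlog]
            nlinarith [mul_le_mul_of_nonneg_left hα1.le (mul_pos ha hlog).le]
    have hx2 : Real.exp (-x) ≤ 4 / (Real.exp 1 ^ 2 * x ^ 2) := exp_neg_le_four_div x hxpos
    calc α ^ (2 * t) * Real.exp (-(a * ∑ i ∈ Finset.Icc (t + 1) T, α ^ i))
        ≤ α ^ (2 * t) * (c * (4 / (Real.exp 1 ^ 2 * x ^ 2))) := by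
          apply mul_le_mul_of_nonneg_left _ (by positivity)
          exact le_trans hexp (mul_le_mul_of_nonneg_left hx2 (by linarith))
      _ = 4 * c * Real.log T ^ 2 / (a ^ 2 * Real.exp 1 ^ 2 * α ^ 2 * T ^ 2) := by
          rw [hx]
          field_simp
          ring_nf
  calc ∑ t ∈ Finset.Icc 1 T, α ^ (2 * t) * Real.exp (-(a * ∑ i ∈ Finset.Icc (t + 1) T, α ^ i))
      ≤ ∑ t ∈ Finset.Icc 1 T, 4 * c * Real.log T ^ 2 / (a ^ 2 * Real.exp 1 ^ 2 * α ^ 2 * T ^ 2) :=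
        Finset.sum_le_sum key
    _ = 4 * c * Real.log T ^ 2 / (a ^ 2 * Real.exp 1 ^ 2 * α ^ 2 * T) := by
        rw [Finset.sum_const, Nat.card_Icc]
        have : (T + 1 - 1 : ℕ) = T := by omega
        rw [this]
        have hαne : α ≠ 0 := ne_of_gt hαpos
        have ha0 : a ≠ 0 := ha.ne'
        have hT0 : (T : ℝ) ≠ 0 := hTpos.ne'
        have he0 : Real.exp 1 ≠ 0 := (Real.exp_pos 1).ne'
        rw [nsmul_eq_mul]
        field_simp
end
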